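/- arXiv:1912.01856 — 4 statements merged into one kernel-verified Lean document; each statement's English description precedes it below -/
import Mathlib

section
/- Let G be a locally compact abelian Hausdorff topological group, W ⊆ G closed and of finite Haar measure, and Q ⊆ Ĝ compact. For every compact set K ⊆ G and every ε > 0 there exist n ∈ ℕ, characters χ_1, …, χ_n ∈ Q, and a partition of Q into Borel sets Q_1, …, Q_n each with compact closure, such that for every f ∈ 𝒢(W,Q)_G one has sup_{g ∈ K} | f(g) − Σ_{j=1}^n c_j(f)·χ_j(g) | ≤ ε, where c_j(f) := ∫_{Q_j} f̂ dλ_{Ĝ}; moreover c_j(f) ≥ 0 for each j and Σ_{j=1}^n c_j(f) = f(0) = 1. -/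
open MeasureTheory Filter Topology Complex
open scoped ComplexOrder

noncomputable section

variable {G : Type*}

/-- A function is positive definite. -/
def IsPosDefFn [CommGroup G] (f : G → ℂ) : Prop :=
  ∀ (n : ℕ) (c : Fin n → ℂ) (g : Fin n → G),
    0 ≤ ∑ j, ∑ k, c j * (starRingEnd ℂ) (c k) * f (g j / g k)

/-- The Fourier transform of `f : G → ℂ` with respect to Haar measure `μ`. -/
def fourierTr [CommGroup G] [TopologicalSpace G] [MeasurableSpace G]
    (μ : Measure G) (f : G → ℂ) (χ : PontryaginDual G) : ℂ :=
  ∫ g, f g * (starRingEnd ℂ) ((χ g : ℂ)) ∂μ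

/-- The Gorbachev class `𝒢(W,Q)_G`. -/
def gclass [CommGroup G] [TopologicalSpace G] [MeasurableSpace G]
    (μ : Measure G) (W : Set G) (Q : Set (PontryaginDual G)) : Set (G → ℝ) :=
  {f | Continuous f ∧ IsPosDefFn (fun g => (f g : ℂ)) ∧ Integrable f μ ∧
       f 1 = 1 ∧ tsupport (fun g => max (f g) 0) ⊆ W ∧
       tsupport (fourierTr μ (fun g => (f g : ℂ))) ⊆ Q}

/-- The Delsarte extremal constant `𝒟(W,Q)_G`. -/
def dconst [CommGroup G] [TopologicalSpace G] [MeasurableSpace G]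
    (μ : Measure G) (W : Set G) (Q : Set (PontryaginDual G)) : ℝ :=
  sSup ((fun f => ∫ g, f g ∂μ) '' gclass μ W Q)


section AuxTop
variable [CommGroup G] [TopologicalSpace G]

lemma contEvalC (g : G) : Continuous (fun χ : PontryaginDual G => (χ g : ℂ)) := by
  have h1 : Continuous (ContinuousMonoidHom.toContinuousMap : PontryaginDual G → C(G, Circle)) :=
    (ContinuousMonoidHom.isInducing_toContinuousMap G Circle).continuous
  have h2 : Continuous fun χ : PontryaginDual G => (ContinuousMonoidHom.toContinuousMap χ) g :=
    (continuous_eval_const g).comp h1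
  exact continuous_subtype_val.comp h2

lemma charDiv (χ : PontryaginDual G) (a b : G) :
    ((χ (a / b) : Circle) : ℂ) = (χ a : ℂ) * (starRingEnd ℂ) ((χ b : ℂ)) := by
  rw [map_div, Circle.coe_div, div_eq_mul_inv, ← Circle.coe_inv, Circle.coe_inv_eq_conj]

lemma charNorm (χ : PontryaginDual G) (g : G) : ‖(χ g : ℂ)‖ = 1 := Circle.norm_coe _

end AuxTop

lemma telescopeAux (a : ℕ → ℝ) (n : ℕ) :
    ∑ j ∈ Finset.range n, a j * ∏ i ∈ Finset.range j, (1 - a i)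
      = 1 - ∏ j ∈ Finset.range n, (1 - a j) := by
  induction n with
  | zero => simp
  | succ n ih => rw [Finset.sum_range_succ, Finset.prod_range_succ, ih]; ring

lemma posdef_finset [CommGroup G] {f : G → ℂ} (hpd : IsPosDefFn f) (s : Finset G) (c : G → ℂ) :
    0 ≤ ∑ a ∈ s, ∑ b ∈ s, c a * (starRingEnd ℂ) (c b) * f (a / b) := by
  have h := hpd s.card (fun j => c (s.equivFin.symm j)) (fun j => (s.equivFin.symm j : G))
  have e1 : ∀ (F : G → ℂ), ∑ j : Fin s.card, F (s.equivFin.symm j) = ∑ a ∈ s, F a := by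
    intro F
    rw [Equiv.sum_comp s.equivFin.symm (fun x : ↥s => F (x : G))]
    exact Finset.sum_coe_sort s F
  calc (0:ℂ) ≤ ∑ j : Fin s.card, ∑ k : Fin s.card,
        c (s.equivFin.symm j) * (starRingEnd ℂ) (c (s.equivFin.symm k)) *
          f ((s.equivFin.symm j : G) / (s.equivFin.symm k : G)) := h
    _ = ∑ a ∈ s, ∑ b ∈ s, c a * (starRingEnd ℂ) (c b) * f (a / b) := by
        rw [← e1 (fun a => ∑ b ∈ s, c a * (starRingEnd ℂ) (c b) * f (a / b))]
        exact Finset.sum_congr rfl fun j _ =>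
          e1 (fun b => c (s.equivFin.symm j) * (starRingEnd ℂ) (c b) * f ((s.equivFin.symm j : G) / b))

lemma exists_near [CommGroup G] [TopologicalSpace G]
    (Q : Set (PontryaginDual G)) [CompactSpace ↥Q] (c : C(↥Q, ℂ)) {η : ℝ} (hη : 0 < η) :
    ∃ cf : G →₀ ℂ, ∀ χ : ↥Q,
      ‖(∑ g ∈ cf.support, cf g * (((χ : PontryaginDual G)) g : ℂ)) - c χ‖ ≤ η := by
  classical
  let e : G → C(↥Q, ℂ) := fun g =>
    ⟨fun χ => ((χ : PontryaginDual G) g : ℂ), (contEvalC g).comp continuous_subtype_val⟩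
  have he : ∀ g (χ : ↥Q), e g χ = ((χ : PontryaginDual G) g : ℂ) := fun _ _ => rfl
  have hemul : ∀ g g', e g * e g' = e (g * g') := by
    intro g g'; ext χ; simp only [ContinuousMap.mul_apply, he, map_mul, Circle.coe_mul]
  have heone : e 1 = 1 := by
    ext χ; simp only [he, map_one, Circle.coe_one, ContinuousMap.one_apply]
  let Sp : Submodule ℂ C(↥Q, ℂ) := Submodule.span ℂ (Set.range e)
  have hgen : ∀ g, e g ∈ Sp := fun g => Submodule.subset_span ⟨g, rfl⟩
  have h1 : (1 : C(↥Q, ℂ)) ∈ Sp := heone ▸ hgen 1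
  have hmul : ∀ x y : C(↥Q, ℂ), x ∈ Sp → y ∈ Sp → x * y ∈ Sp := by
    intro x y hx hy
    induction hx using Submodule.span_induction with
    | mem x hx =>
      obtain ⟨g, rfl⟩ := hx
      induction hy using Submodule.span_induction with
      | mem y hy => obtain ⟨g', rfl⟩ := hy; rw [hemul]; exact hgen _
      | zero => rw [mul_zero]; exact Sp.zero_mem
      | add y z _ _ hy hz => rw [mul_add]; exact Sp.add_mem hy hz
      | smul a y _ hy => rw [mul_smul_comm]; exact Sp.smul_mem a hy
    | zero => rw [zero_mul]; exact Sp.zero_mem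
    | add x z _ _ hx' hz' => rw [add_mul]; exact Sp.add_mem hx' hz'
    | smul a x _ hx' => rw [smul_mul_assoc]; exact Sp.smul_mem a hx'
  let A : StarSubalgebra ℂ C(↥Q, ℂ) :=
    { toSubalgebra := Sp.toSubalgebra h1 hmul
      star_mem' := by
        intro x hx
        have hx' : x ∈ Sp := hx
        clear hx
        show star x ∈ Sp
        induction hx' using Submodule.span_induction with
        | mem x hx =>
          obtain ⟨g, rfl⟩ := hx
          have : star (e g) = e g⁻¹ := by
            ext χ
            simp only [ContinuousMap.star_apply, he, map_inv, Circle.coe_inv_eq_conj]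
            rfl
          rw [this]; exact hgen _
        | zero => rw [star_zero]; exact Sp.zero_mem
        | add x y _ _ hx' hy' => rw [star_add]; exact Sp.add_mem hx' hy'
        | smul a x _ hx' => rw [star_smul]; exact Sp.smul_mem _ hx' }
  have hsep : A.SeparatesPoints := by
    intro x y hxy
    have hne : (x : PontryaginDual G) ≠ (y : PontryaginDual G) := fun h => hxy (Subtype.ext h)
    obtain ⟨g, hg⟩ := DFunLike.ne_iff.mp hne
    refine ⟨_, ⟨e g, ?_, rfl⟩, ?_⟩
    · exact hgen g
    · simp only [he]
      exact fun h => hg (Circle.coe_injective h)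
  have htop := ContinuousMap.starSubalgebra_topologicalClosure_eq_top_of_separatesPoints A hsep
  have hc : c ∈ closure (A : Set C(↥Q, ℂ)) := by
    have : c ∈ A.topologicalClosure := htop ▸ trivial
    exact this
  obtain ⟨p, hpA, hpd⟩ := Metric.mem_closure_iff.mp hc η hη
  have hpSp : p ∈ Sp := hpA
  obtain ⟨cf, hcf⟩ := Finsupp.mem_span_range_iff_exists_finsupp.mp hpSp
  refine ⟨cf, fun χ => ?_⟩
  have hval : (∑ g ∈ cf.support, cf g * ((χ : PontryaginDual G) g : ℂ)) = p χ := by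
    rw [← hcf]
    rw [Finsupp.sum]
    rw [ContinuousMap.sum_apply]
    exact Finset.sum_congr rfl fun g _ => by rw [ContinuousMap.smul_apply, he, smul_eq_mul]
  rw [hval]
  have := ContinuousMap.dist_apply_le_dist (f := p) (g := c) χ
  rw [dist_comm] at hpd
  calc ‖p χ - c χ‖ = dist (p χ) (c χ) := (Complex.dist_eq _ _).symm
    _ ≤ dist p c := this
    _ ≤ η := le_of_lt hpd

lemma normSqCast (z : ℂ) : ((‖z‖ ^ 2 : ℝ) : ℂ) = z * (starRingEnd ℂ) z := by
  rw [Complex.mul_conj, Complex.normSq_eq_norm_sq]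

lemma coreL [CommGroup G] [TopologicalSpace G] [MeasurableSpace G]
    [MeasurableSpace (PontryaginDual G)] [OpensMeasurableSpace (PontryaginDual G)]
    (μ : Measure G) (ν : Measure (PontryaginDual G))
    {Q : Set (PontryaginDual G)} (hQ : IsCompact Q)
    {f : G → ℝ} (hpd : IsPosDefFn fun g => ((f g : ℝ) : ℂ)) (hf1 : f 1 = 1)
    (hinvf : ∀ g : G, ((f g : ℝ) : ℂ)
      = ∫ χ, fourierTr μ (fun x => ((f x : ℝ) : ℂ)) χ * (χ g : ℂ) ∂ν)
    (hF0 : ∀ χ ∉ Q, fourierTr μ (fun x => ((f x : ℝ) : ℂ)) χ = 0) :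
    Integrable (fourierTr μ (fun x => ((f x : ℝ) : ℂ))) ν ∧
    (∫ χ, fourierTr μ (fun x => ((f x : ℝ) : ℂ)) χ ∂ν) = 1 ∧
    ∀ h : PontryaginDual G → ℝ, Continuous h → (∀ χ, 0 ≤ h χ) → (∃ C, ∀ χ, h χ ≤ C) →
      0 ≤ ∫ χ, fourierTr μ (fun x => ((f x : ℝ) : ℂ)) χ * (h χ : ℂ) ∂ν := by
  classical
  set F : PontryaginDual G → ℂ := fourierTr μ (fun x => ((f x : ℝ) : ℂ)) with hFdef
  -- value of the full integral
  have hone : (∫ χ, F χ ∂ν) = 1 := by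
    have h1 := hinvf 1
    simp only [map_one, Circle.coe_one, mul_one, hf1, Complex.ofReal_one] at h1
    exact h1.symm
  have hFint : Integrable F ν := by
    by_contra hc
    rw [integral_undef hc] at hone
    exact one_ne_zero hone.symm
  refine ⟨hFint, hone, ?_⟩
  -- integrability helper
  have hInt1 : ∀ w : PontryaginDual G → ℂ, Continuous w → (∃ C, ∀ χ, ‖w χ‖ ≤ C) →
      Integrable (fun χ => F χ * w χ) ν := by
    rintro w hw ⟨C, hC⟩
    refine Integrable.mono' (hFint.norm.const_mul C)
      (hFint.aestronglyMeasurable.mul hw.aestronglyMeasurable) ?_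
    filter_upwards with χ
    rw [norm_mul]
    calc ‖F χ‖ * ‖w χ‖ ≤ ‖F χ‖ * C := by
          exact mul_le_mul_of_nonneg_left (hC χ) (norm_nonneg _)
      _ = C * ‖F χ‖ := mul_comm _ _
  have hIntChar : ∀ g : G, Integrable (fun χ => F χ * (χ g : ℂ)) ν := fun g =>
    hInt1 _ (contEvalC g) ⟨1, fun χ => le_of_eq (charNorm χ g)⟩
  -- positivity on squares of trigonometric polynomials
  have hPos : ∀ cf : G →₀ ℂ,
      0 ≤ ∫ χ, F χ * ((‖∑ g ∈ cf.support, cf g * (χ g : ℂ)‖ ^ 2 : ℝ) : ℂ) ∂ν := by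
    intro cf
    set s := cf.support with hs
    set P : PontryaginDual G → ℂ := fun χ => ∑ g ∈ s, cf g * (χ g : ℂ) with hPdef
    have hterm : ∀ a b : G,
        Integrable (fun χ => cf a * (starRingEnd ℂ) (cf b) * (F χ * (χ (a / b) : ℂ))) ν :=
      fun a b => (hIntChar (a / b)).const_mul _
    have key : (∑ a ∈ s, ∑ b ∈ s, cf a * (starRingEnd ℂ) (cf b) * ((f (a / b) : ℝ) : ℂ))
        = ∫ χ, F χ * ((‖P χ‖ ^ 2 : ℝ) : ℂ) ∂ν := by
      calc (∑ a ∈ s, ∑ b ∈ s, cf a * (starRingEnd ℂ) (cf b) * ((f (a / b) : ℝ) : ℂ))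
          = ∑ a ∈ s, ∑ b ∈ s, ∫ χ, cf a * (starRingEnd ℂ) (cf b)
              * (F χ * (χ (a / b) : ℂ)) ∂ν := by
            refine Finset.sum_congr rfl fun a _ => Finset.sum_congr rfl fun b _ => ?_
            rw [hinvf (a / b), ← integral_const_mul]
        _ = ∫ χ, ∑ a ∈ s, ∑ b ∈ s, cf a * (starRingEnd ℂ) (cf b)
              * (F χ * (χ (a / b) : ℂ)) ∂ν := by
            rw [integral_finset_sum s fun a _ => integrable_finset_sum s fun b _ => hterm a b]
            exact Finset.sum_congr rfl fun a _ =>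
              (integral_finset_sum s fun b _ => hterm a b).symm
        _ = ∫ χ, F χ * ((‖P χ‖ ^ 2 : ℝ) : ℂ) ∂ν := by
            congr 1
            funext χ
            rw [normSqCast, hPdef]
            simp only [map_sum, map_mul]
            rw [Finset.sum_mul_sum, Finset.mul_sum]
            refine Finset.sum_congr rfl fun a _ => ?_
            rw [Finset.mul_sum]
            refine Finset.sum_congr rfl fun b _ => ?_
            rw [charDiv]
            ring
    rw [← key]
    exact posdef_finset hpd s cf
  -- the main positivity statement
  rintro h hhc hh0 ⟨C, hC⟩
  haveI : CompactSpace ↥Q := isCompact_iff_compactSpace.mp hQ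
  set z := ∫ χ, F χ * (h χ : ℂ) ∂ν with hzdef
  have hIz : Integrable (fun χ => F χ * (h χ : ℂ)) ν := by
    refine hInt1 _ (Complex.continuous_ofReal.comp hhc) ⟨max C 0, fun χ => ?_⟩
    rw [Complex.norm_real, Real.norm_eq_abs, _root_.abs_of_nonneg (hh0 χ)]
    exact le_max_of_le_left (hC χ)
  set M : ℝ := ∫ χ, ‖F χ‖ ∂ν with hMdef
  have hM0 : 0 ≤ M := integral_nonneg fun χ => norm_nonneg _
  set R : ℝ := Real.sqrt (max C 0) with hRdef
  have hR0 : 0 ≤ R := Real.sqrt_nonneg _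
  have hsq : ∀ χ, Real.sqrt (h χ) ≤ R := fun χ =>
    Real.sqrt_le_sqrt (le_max_of_le_left (hC χ))
  -- the approximation estimate
  have est : ∀ η : ℝ, 0 < η → ∃ zP : ℂ, 0 ≤ zP ∧ ‖z - zP‖ ≤ η * (2 * R + η) * M := by
    intro η hη
    set c0 : C(↥Q, ℂ) :=
      ⟨fun χ => (Real.sqrt (h (χ : PontryaginDual G)) : ℂ),
        Complex.continuous_ofReal.comp (Real.continuous_sqrt.comp
          (hhc.comp continuous_subtype_val))⟩ with hc0
    obtain ⟨cf, hcf⟩ := exists_near Q c0 hη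
    set P : PontryaginDual G → ℂ := fun χ => ∑ g ∈ cf.support, cf g * (χ g : ℂ) with hPdef
    have hPcont : Continuous P := continuous_finset_sum _ fun g _ =>
      continuous_const.mul (contEvalC g)
    have hPbd : ∀ χ, ‖P χ‖ ≤ ∑ g ∈ cf.support, ‖cf g‖ := by
      intro χ
      refine le_trans (norm_sum_le _ _) (Finset.sum_le_sum fun g _ => ?_)
      rw [norm_mul, charNorm, mul_one]
    set B : ℝ := ∑ g ∈ cf.support, ‖cf g‖ with hBdef
    have hIzP : Integrable (fun χ => F χ * ((‖P χ‖ ^ 2 : ℝ) : ℂ)) ν := by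
      refine hInt1 _ (Complex.continuous_ofReal.comp ((hPcont.norm).pow 2)) ⟨B ^ 2, fun χ => ?_⟩
      rw [Complex.norm_real, Real.norm_eq_abs, _root_.abs_of_nonneg (by positivity)]
      exact pow_le_pow_left₀ (norm_nonneg _) (hPbd χ) 2
    refine ⟨∫ χ, F χ * ((‖P χ‖ ^ 2 : ℝ) : ℂ) ∂ν, hPos cf, ?_⟩
    have hdiff : z - (∫ χ, F χ * ((‖P χ‖ ^ 2 : ℝ) : ℂ) ∂ν)
        = ∫ χ, F χ * (((h χ - ‖P χ‖ ^ 2 : ℝ)) : ℂ) ∂ν := by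
      rw [hzdef, ← integral_sub hIz hIzP]
      congr 1
      funext χ
      push_cast
      ring
    rw [hdiff]
    have hptw : ∀ χ, ‖F χ * (((h χ - ‖P χ‖ ^ 2 : ℝ)) : ℂ)‖ ≤ ‖F χ‖ * (η * (2 * R + η)) := by
      intro χ
      by_cases hχ : χ ∈ Q
      · rw [norm_mul, Complex.norm_real, Real.norm_eq_abs]
        refine mul_le_mul_of_nonneg_left ?_ (norm_nonneg _)
        have happ := hcf ⟨χ, hχ⟩
        have happ' : ‖P χ - (Real.sqrt (h χ) : ℂ)‖ ≤ η := happ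
        have hs0 : 0 ≤ Real.sqrt (h χ) := Real.sqrt_nonneg _
        have hPn : |‖P χ‖ - Real.sqrt (h χ)| ≤ η := by
          refine le_trans ?_ happ'
          have := abs_norm_sub_norm_le (P χ) ((Real.sqrt (h χ) : ℂ))
          rwa [Complex.norm_real, Real.norm_eq_abs, _root_.abs_of_nonneg hs0] at this
        have hhsq : h χ = Real.sqrt (h χ) ^ 2 := (Real.sq_sqrt (hh0 χ)).symm
        have hfact : h χ - ‖P χ‖ ^ 2
            = (Real.sqrt (h χ) - ‖P χ‖) * (Real.sqrt (h χ) + ‖P χ‖) := by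
          nth_rewrite 1 [hhsq]; ring
        rw [hfact, abs_mul]
        have h1 : |Real.sqrt (h χ) - ‖P χ‖| ≤ η := by rwa [abs_sub_comm]
        have h2 : |Real.sqrt (h χ) + ‖P χ‖| ≤ 2 * R + η := by
          rw [_root_.abs_of_nonneg (by positivity)]
          have hPR : ‖P χ‖ ≤ R + η := by
            have := abs_le.mp hPn
            linarith [this.1, hsq χ]
          linarith [hsq χ]
        exact mul_le_mul h1 h2 (abs_nonneg _) (le_of_lt hη)
      · rw [hF0 χ hχ]
        simp only [zero_mul, norm_zero]
        positivity
    calc ‖∫ χ, F χ * (((h χ - ‖P χ‖ ^ 2 : ℝ)) : ℂ) ∂ν‖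
        ≤ ∫ χ, ‖F χ‖ * (η * (2 * R + η)) ∂ν :=
          norm_integral_le_of_norm_le (hFint.norm.mul_const _)
            (Filter.Eventually.of_forall hptw)
      _ = M * (η * (2 * R + η)) := by rw [integral_mul_const]
      _ = η * (2 * R + η) * M := by ring
  -- small parameter choice
  have small : ∀ τ : ℝ, 0 < τ → ∃ η : ℝ, 0 < η ∧ η * (2 * R + η) * M ≤ τ := by
    intro τ hτ
    refine ⟨min 1 (τ / ((2 * R + 1) * M + 1)), lt_min one_pos (by positivity), ?_⟩
    set η := min 1 (τ / ((2 * R + 1) * M + 1)) with hη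
    have hη1 : η ≤ 1 := min_le_left _ _
    have hη2 : η ≤ τ / ((2 * R + 1) * M + 1) := min_le_right _ _
    have hη0 : 0 < η := lt_min one_pos (by positivity)
    have hA : 0 ≤ (2 * R + 1) * M := by positivity
    calc η * (2 * R + η) * M ≤ η * (2 * R + 1) * M := by
          have h3 : 2 * R + η ≤ 2 * R + 1 := by linarith
          have h4 : η * (2 * R + η) ≤ η * (2 * R + 1) := by
            exact mul_le_mul_of_nonneg_left h3 hη0.le
          exact mul_le_mul_of_nonneg_right h4 hM0
      _ ≤ (τ / ((2 * R + 1) * M + 1)) * ((2 * R + 1) * M) := by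
          rw [mul_assoc]
          exact mul_le_mul_of_nonneg_right hη2 (by positivity)
      _ ≤ τ := by
          rw [div_mul_eq_mul_div, div_le_iff₀ (by positivity)]
          nlinarith
  -- conclude
  rw [Complex.le_def]
  constructor
  · rw [Complex.zero_re]
    refine le_of_forall_pos_le_add ?_
    intro τ hτ
    obtain ⟨η, hη0, hηle⟩ := small τ hτ
    obtain ⟨zP, hzP0, hzPle⟩ := est η hη0
    have h1 : 0 ≤ zP.re := (Complex.le_def.mp hzP0).1
    have h2 : |z.re - zP.re| ≤ η * (2 * R + η) * M := by
      have := Complex.abs_re_le_norm (z - zP)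
      rw [Complex.sub_re] at this
      exact le_trans this hzPle
    have := abs_le.mp h2
    linarith [this.1]
  · rw [Complex.zero_im]
    have himle : ∀ τ : ℝ, 0 < τ → |z.im| ≤ τ := by
      intro τ hτ
      obtain ⟨η, hη0, hηle⟩ := small τ hτ
      obtain ⟨zP, hzP0, hzPle⟩ := est η hη0
      have h1 : zP.im = 0 := (Complex.le_def.mp hzP0).2.symm
      have h2 : |z.im - zP.im| ≤ η * (2 * R + η) * M := by
        have := Complex.abs_im_le_norm (z - zP)
        rw [Complex.sub_im] at this
        exact le_trans this hzPle
      rw [h1, sub_zero] at h2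
      exact le_trans h2 hηle
    have : |z.im| ≤ 0 := le_of_forall_pos_le_add (by intro τ hτ; simpa using himle τ hτ)
    exact (abs_eq_zero.mp (le_antisymm this (abs_nonneg _))).symm

/-- finite approximation of functions in `𝒢(W,Q)_G` by nonnegative convex
combinations of characters from `Q`, uniformly on a compact set `K`, up to `ε`. -/
theorem gclass_uniform_character_approximation
    [CommGroup G] [TopologicalSpace G] [IsTopologicalGroup G]
    [LocallyCompactSpace G] [T2Space G] [MeasurableSpace G] [BorelSpace G]
    (μ : Measure G) [μ.IsHaarMeasure]
    [MeasurableSpace (PontryaginDual G)] [BorelSpace (PontryaginDual G)]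
    (ν : Measure (PontryaginDual G)) [ν.IsHaarMeasure]
    -- `ν` is normalized so that Fourier inversion holds (Plancherel measure):
    (hinv : ∀ f : G → ℂ, Continuous f → IsPosDefFn f → Integrable f μ →
      ∀ g : G, f g = ∫ χ, fourierTr μ f χ * (χ g : ℂ) ∂ν)
    (W : Set G) (hWclosed : IsClosed W) (hWfin : μ W < ⊤)
    (Q : Set (PontryaginDual G)) (hQ : IsCompact Q)
    (K : Set G) (hK : IsCompact K) (ε : ℝ) (hε : 0 < ε) :
    ∃ (n : ℕ) (χ : Fin n → PontryaginDual G) (Qp : Fin n → Set (PontryaginDual G)),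
      (∀ j, χ j ∈ Q) ∧
      (∀ j, MeasurableSet (Qp j)) ∧
      (∀ j, IsCompact (closure (Qp j))) ∧
      (∀ i j, i ≠ j → Disjoint (Qp i) (Qp j)) ∧
      (⋃ j, Qp j) = Q ∧
      ∀ f ∈ gclass μ W Q,
        (∀ j, 0 ≤ ∫ ξ in Qp j, fourierTr μ (fun g => (f g : ℂ)) ξ ∂ν) ∧
        (∑ j, ∫ ξ in Qp j, fourierTr μ (fun g => (f g : ℂ)) ξ ∂ν) = (1 : ℂ) ∧
        ∀ g ∈ K,
          ‖(f g : ℂ) -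
            ∑ j, (∫ ξ in Qp j, fourierTr μ (fun g' => (f g' : ℂ)) ξ ∂ν) * (χ j g : ℂ)‖ ≤ ε := by
  classical
  haveI hKc : CompactSpace ↥K := isCompact_iff_compactSpace.mp hK
  set ε' : ℝ := ε / 2 with hε'def
  have hε' : 0 < ε' := by positivity
  let ι : C(Circle, ℂ) := ⟨fun z => (z : ℂ), continuous_subtype_val⟩
  let β : PontryaginDual G → C(↥K, ℂ) := fun χ =>
    ι.comp ((ContinuousMonoidHom.toContinuousMap χ).restrict K)
  have hβ : Continuous β := by
    have h1 : Continuous (ContinuousMonoidHom.toContinuousMap :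
        PontryaginDual G → C(G, Circle)) :=
      (ContinuousMonoidHom.isInducing_toContinuousMap G Circle).continuous
    exact (ContinuousMap.continuous_postcomp ι).comp
      ((ContinuousMap.continuous_restrict K).comp h1)
  have hβeval : ∀ (χ : PontryaginDual G) (x : ↥K), β χ x = ((χ (x : G)) : ℂ) := fun _ _ => rfl
  -- the cover
  have hmem : ∀ χ₀ ∈ Q, β ⁻¹' Metric.ball (β χ₀) ε' ∈ 𝓝 χ₀ := fun χ₀ _ =>
    (Metric.isOpen_ball.preimage hβ).mem_nhds (by simp [Metric.mem_ball_self hε'])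
  obtain ⟨t, htQ, hcover⟩ :=
    hQ.elim_nhds_subcover (fun χ₀ => β ⁻¹' Metric.ball (β χ₀) ε') hmem
  set n := t.card with hn
  let χ' : ℕ → PontryaginDual G := fun i =>
    if h : i < n then ((t.equivFin.symm ⟨i, h⟩ : ↥t) : PontryaginDual G) else 1
  have hχ'Q : ∀ i, i < n → χ' i ∈ Q := by
    intro i h
    simp only [χ', dif_pos h]
    exact htQ _ (t.equivFin.symm ⟨i, h⟩).2
  let V : ℕ → Set (PontryaginDual G) := fun i =>
    if i < n then β ⁻¹' Metric.ball (β (χ' i)) ε' else ∅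
  have hVmeas : ∀ i, MeasurableSet (V i) := by
    intro i
    by_cases h : i < n
    · simp only [V, if_pos h]
      exact (Metric.isOpen_ball.preimage hβ).measurableSet
    · simp only [V, if_neg h]; exact MeasurableSet.empty
  have hVempty : ∀ i, ¬(i < n) → V i = ∅ := fun i h => by simp only [V, if_neg h]
  have hVnear : ∀ i, ∀ χ ∈ V i, dist (β χ) (β (χ' i)) < ε' := by
    intro i χ hχ
    by_cases h : i < n
    · simp only [V, if_pos h, Set.mem_preimage, Metric.mem_ball] at hχ
      exact hχ
    · rw [hVempty i h] at hχ; exact absurd hχ (Set.notMem_empty χ)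
  have hVmem : ∀ i, i < n → ∀ χ, dist (β χ) (β (χ' i)) < ε' → χ ∈ V i := by
    intro i h χ hχ
    simp only [V, if_pos h, Set.mem_preimage, Metric.mem_ball]
    exact hχ
  have hQV : Q ⊆ ⋃ i, V i := by
    intro q hq
    rcases Set.mem_iUnion₂.mp (hcover hq) with ⟨x, hxt, hx⟩
    have hlt : ((t.equivFin ⟨x, hxt⟩ : Fin n) : ℕ) < n := (t.equivFin ⟨x, hxt⟩).2
    refine Set.mem_iUnion.mpr ⟨(t.equivFin ⟨x, hxt⟩ : Fin n), ?_⟩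
    have hx' : χ' (t.equivFin ⟨x, hxt⟩ : Fin n) = x := by
      simp only [χ', dif_pos hlt]
      rw [show (⟨((t.equivFin ⟨x, hxt⟩ : Fin n) : ℕ), hlt⟩ : Fin n) = t.equivFin ⟨x, hxt⟩
        from Fin.ext rfl]
      rw [Equiv.symm_apply_apply]
    refine hVmem _ hlt q ?_
    rw [hx']
    exact hx
  -- disjointification
  let S : ℕ → Set (PontryaginDual G) := fun j => V j \ ⋃ (i : ℕ), ⋃ (_ : i < j), V i
  have hSsub : ∀ j, S j ⊆ V j := fun j => Set.diff_subset
  have hSmeas : ∀ j, MeasurableSet (S j) := fun j =>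
    (hVmeas j).diff (MeasurableSet.iUnion fun i => MeasurableSet.iUnion fun _ => hVmeas i)
  have hSmem : ∀ j χ, χ ∈ S j ↔ χ ∈ V j ∧ ∀ i, i < j → χ ∉ V i := by
    intro j χ
    simp only [S, Set.mem_diff, Set.mem_iUnion, not_exists]
  have hSdisj : ∀ i j, i ≠ j → Disjoint (S i) (S j) := by
    have key : ∀ i j, i < j → Disjoint (S i) (S j) := by
      intro i j hij
      rw [Set.disjoint_left]
      intro χ hχi hχj
      exact ((hSmem j χ).mp hχj).2 i hij (hSsub i hχi)
    intro i j hij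
    rcases lt_or_gt_of_ne hij with h | h
    · exact key i j h
    · exact (key j i h).symm
  have hUS : ∀ χ, χ ∈ ⋃ i, V i → ∃ j, χ ∈ S j := by
    intro χ hχ
    have hex : ∃ i, χ ∈ V i := Set.mem_iUnion.mp hχ
    refine ⟨Nat.find hex, (hSmem _ χ).mpr ⟨Nat.find_spec hex, fun i hi => Nat.find_min hex hi⟩⟩
  have hSn : ∀ j χ, χ ∈ S j → j < n := by
    intro j χ hχ
    by_contra h
    have := hSsub j hχ
    rw [hVempty j h] at this
    exact this
  -- the bump functions
  let ψ : ℕ → ℕ → PontryaginDual G → ℝ := fun i m χ =>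
    min 1 ((m : ℝ) * max (ε' - dist (β χ) (β (χ' i))) 0)
  have hψ0 : ∀ i m χ, 0 ≤ ψ i m χ := fun i m χ =>
    le_min zero_le_one (by positivity)
  have hψ1 : ∀ i m χ, ψ i m χ ≤ 1 := fun i m χ => min_le_left _ _
  have hψcont : ∀ i m, Continuous (ψ i m) := by
    intro i m
    exact continuous_const.min (continuous_const.mul
      ((continuous_const.sub (hβ.dist continuous_const)).max continuous_const))
  have hψsupp : ∀ i m χ, ψ i m χ ≠ 0 → dist (β χ) (β (χ' i)) < ε' := by
    intro i m χ hne
    by_contra hge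
    push_neg at hge
    have h0 : max (ε' - dist (β χ) (β (χ' i))) 0 = 0 := max_eq_right (by linarith)
    apply hne
    simp only [ψ, h0, mul_zero]
    exact min_eq_right zero_le_one
  have hψVmem : ∀ i, i < n → ∀ m χ, ψ i m χ ≠ 0 → χ ∈ V i := fun i hi m χ hne =>
    hVmem i hi χ (hψsupp i m χ hne)
  have hψlim : ∀ i, ∀ χ,
      Tendsto (fun m : ℕ => ψ i m χ) atTop (𝓝 (if dist (β χ) (β (χ' i)) < ε' then 1 else 0)) := by
    intro i χ
    by_cases hd : dist (β χ) (β (χ' i)) < ε'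
    · rw [if_pos hd]
      set δ : ℝ := ε' - dist (β χ) (β (χ' i)) with hδ
      have hδ0 : 0 < δ := by simp only [hδ]; linarith
      have hev : ∀ m : ℕ, m ≥ ⌈1/δ⌉₊ → ψ i m χ = 1 := by
        intro m hm
        have h1 : (1:ℝ)/δ ≤ (m : ℝ) := le_trans (Nat.le_ceil _) (by exact_mod_cast hm)
        have h2 : (1:ℝ) ≤ (m : ℝ) * δ := by
          rw [div_le_iff₀ hδ0] at h1
          linarith
        have h3 : max δ 0 = δ := max_eq_left hδ0.le
        simp only [ψ, ← hδ, h3]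
        exact min_eq_left h2
      exact tendsto_const_nhds.congr' ((eventually_ge_atTop _).mono fun m hm => (hev m hm).symm)
    · rw [if_neg hd]
      push_neg at hd
      have hev : ∀ m : ℕ, ψ i m χ = 0 := by
        intro m
        have h0 : max (ε' - dist (β χ) (β (χ' i))) 0 = 0 := max_eq_right (by linarith)
        simp only [ψ, h0, mul_zero]
        exact min_eq_right zero_le_one
      exact tendsto_const_nhds.congr fun m => (hev m).symm
  have hψlimV : ∀ i, i < n → ∀ χ,
      Tendsto (fun m : ℕ => ψ i m χ) atTop (𝓝 (Set.indicator (V i) (fun _ => (1:ℝ)) χ)) := by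
    intro i hi χ
    have hT := hψlim i χ
    by_cases hχ : χ ∈ V i
    · rw [if_pos (hVnear i χ hχ)] at hT
      rwa [Set.indicator_of_mem hχ]
    · have hd : ¬ dist (β χ) (β (χ' i)) < ε' := fun hlt => hχ (hVmem i hi χ hlt)
      rw [if_neg hd] at hT
      rwa [Set.indicator_of_notMem hχ]
  -- the disjointified bumps
  let h' : ℕ → ℕ → PontryaginDual G → ℝ := fun j m χ =>
    ψ j m χ * ∏ i ∈ Finset.range j, (1 - ψ i m χ)
  have hh'cont : ∀ j m, Continuous (h' j m) := fun j m =>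
    (hψcont j m).mul (continuous_finset_prod _ fun i _ => continuous_const.sub (hψcont i m))
  have hh'0 : ∀ j m χ, 0 ≤ h' j m χ := fun j m χ =>
    mul_nonneg (hψ0 j m χ) (Finset.prod_nonneg fun i _ => by linarith [hψ1 i m χ])
  have hh'1 : ∀ j m χ, h' j m χ ≤ 1 := fun j m χ =>
    mul_le_one₀ (hψ1 j m χ) (Finset.prod_nonneg fun i _ => by linarith [hψ1 i m χ])
      (Finset.prod_le_one (fun i _ => by linarith [hψ1 i m χ])
        (fun i _ => by linarith [hψ0 i m χ]))
  have hh'supp : ∀ j m χ, h' j m χ ≠ 0 → ψ j m χ ≠ 0 := by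
    intro j m χ hne h0
    exact hne (by simp only [h', h0, zero_mul])
  have hh'lim : ∀ j, j < n → ∀ χ,
      Tendsto (fun m : ℕ => h' j m χ) atTop (𝓝 (Set.indicator (S j) (fun _ => (1:ℝ)) χ)) := by
    intro j hj χ
    have hlim : Tendsto (fun m : ℕ => h' j m χ) atTop
        (𝓝 ((Set.indicator (V j) (fun _ => (1:ℝ)) χ) *
          ∏ i ∈ Finset.range j, (1 - Set.indicator (V i) (fun _ => (1:ℝ)) χ))) := by
      exact (hψlimV j hj χ).mul (tendsto_finset_prod _ fun i hi =>
        tendsto_const_nhds.sub (hψlimV i (lt_trans (Finset.mem_range.mp hi) hj) χ))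
    have hval : (Set.indicator (V j) (fun _ => (1:ℝ)) χ) *
        ∏ i ∈ Finset.range j, (1 - Set.indicator (V i) (fun _ => (1:ℝ)) χ)
        = Set.indicator (S j) (fun _ => (1:ℝ)) χ := by
      by_cases hSj : χ ∈ S j
      · obtain ⟨hVj, hVi⟩ := (hSmem j χ).mp hSj
        rw [Set.indicator_of_mem hSj, Set.indicator_of_mem hVj]
        rw [Finset.prod_congr rfl fun i hi => by
          rw [Set.indicator_of_notMem (hVi i (Finset.mem_range.mp hi))]]
        simp
      · rw [Set.indicator_of_notMem hSj]
        by_cases hVj : χ ∈ V j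
        · have : ∃ i, i < j ∧ χ ∈ V i := by
            by_contra hno
            push_neg at hno
            exact hSj ((hSmem j χ).mpr ⟨hVj, hno⟩)
          obtain ⟨i, hij, hVi⟩ := this
          rw [Finset.prod_eq_zero (Finset.mem_range.mpr hij)
            (by rw [Set.indicator_of_mem hVi]; ring)]
          ring
        · rw [Set.indicator_of_notMem hVj]; ring
    rwa [hval] at hlim
  have htel : ∀ m χ, ∑ j ∈ Finset.range n, h' j m χ
      = 1 - ∏ j ∈ Finset.range n, (1 - ψ j m χ) := fun m χ =>
    telescopeAux (fun i => ψ i m χ) n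
  have hsum1 : ∀ m χ, ∑ j ∈ Finset.range n, h' j m χ ≤ 1 := by
    intro m χ
    rw [htel m χ]
    have : 0 ≤ ∏ j ∈ Finset.range n, (1 - ψ j m χ) :=
      Finset.prod_nonneg fun i _ => by linarith [hψ1 i m χ]
    linarith
  -- provide the answer
  refine ⟨n, fun j => χ' j, fun j => Q ∩ S j, fun j => hχ'Q j j.2,
    fun j => (hQ.isClosed.measurableSet).inter (hSmeas j), ?_, ?_, ?_, ?_⟩
  · intro j
    exact IsCompact.of_isClosed_subset hQ isClosed_closure
      (closure_minimal Set.inter_subset_left hQ.isClosed)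
  · intro i j hij
    have hne : (i : ℕ) ≠ (j : ℕ) := fun h => hij (Fin.ext h)
    exact (hSdisj i j hne).mono Set.inter_subset_right Set.inter_subset_right
  · ext q
    constructor
    · intro hq
      rcases Set.mem_iUnion.mp hq with ⟨j, hj⟩
      exact hj.1
    · intro hq
      obtain ⟨k, hk⟩ := hUS q (hQV hq)
      have hkn : k < n := hSn k q hk
      show q ∈ ⋃ j : Fin n, Q ∩ S (j : ℕ)
      exact Set.mem_iUnion_of_mem ⟨k, hkn⟩ ⟨hq, hk⟩
  · intro f hf
    obtain ⟨hfc, hpd, hfi, hf1, _hsuppP, hsuppF⟩ := hf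
    have hF0 : ∀ χ ∉ Q, fourierTr μ (fun x => ((f x : ℝ) : ℂ)) χ = 0 := fun χ hχ =>
      image_eq_zero_of_notMem_tsupport (fun hmem => hχ (hsuppF hmem))
    have hinvf : ∀ g : G, ((f g : ℝ) : ℂ)
        = ∫ χ, fourierTr μ (fun x => ((f x : ℝ) : ℂ)) χ * (χ g : ℂ) ∂ν :=
      hinv _ (Complex.continuous_ofReal.comp hfc) hpd hfi.ofReal
    obtain ⟨hFint, hone, hL⟩ := coreL μ ν hQ hpd hf1 hinvf hF0
    set F : PontryaginDual G → ℂ := fourierTr μ (fun x => ((f x : ℝ) : ℂ)) with hFdef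
    -- integrability helpers
    have hInt1 : ∀ w : PontryaginDual G → ℂ, Continuous w → (∃ C, ∀ χ, ‖w χ‖ ≤ C) →
        Integrable (fun χ => F χ * w χ) ν := by
      rintro w hw ⟨C, hC⟩
      refine Integrable.mono' (hFint.norm.const_mul C)
        (hFint.aestronglyMeasurable.mul hw.aestronglyMeasurable) ?_
      filter_upwards with χ
      rw [norm_mul]
      calc ‖F χ‖ * ‖w χ‖ ≤ ‖F χ‖ * C := mul_le_mul_of_nonneg_left (hC χ) (norm_nonneg _)
        _ = C * ‖F χ‖ := mul_comm _ _
    have hIntChar : ∀ g : G, Integrable (fun χ => F χ * (χ g : ℂ)) ν := fun g =>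
      hInt1 _ (contEvalC g) ⟨1, fun χ => le_of_eq (charNorm χ g)⟩
    have hIntH : ∀ j m, Integrable (fun χ => F χ * ((h' j m χ : ℝ) : ℂ)) ν := fun j m =>
      hInt1 _ (Complex.continuous_ofReal.comp (hh'cont j m)) ⟨1, fun χ => by
        rw [Complex.norm_real, Real.norm_eq_abs, _root_.abs_of_nonneg (hh'0 j m χ)]
        exact hh'1 j m χ⟩
    have hLh' : ∀ j m, 0 ≤ ∫ χ, F χ * ((h' j m χ : ℝ) : ℂ) ∂ν := fun j m =>
      hL _ (hh'cont j m) (hh'0 j m) ⟨1, hh'1 j m⟩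
    -- limits of the regularized integrals
    have climF : ∀ j, j < n → Tendsto (fun m => ∫ χ, F χ * ((h' j m χ : ℝ) : ℂ) ∂ν) atTop
        (𝓝 (∫ ξ in S j, F ξ ∂ν)) := by
      intro j hj
      rw [← integral_indicator (hSmeas j)]
      refine tendsto_integral_of_dominated_convergence (fun χ => ‖F χ‖)
        (fun m => (hIntH j m).aestronglyMeasurable) hFint.norm ?_ ?_
      · intro m
        filter_upwards with χ
        rw [norm_mul, Complex.norm_real, Real.norm_eq_abs,
          _root_.abs_of_nonneg (hh'0 j m χ)]
        calc ‖F χ‖ * h' j m χ ≤ ‖F χ‖ * 1 :=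
              mul_le_mul_of_nonneg_left (hh'1 j m χ) (norm_nonneg _)
          _ = ‖F χ‖ := mul_one _
      · filter_upwards with χ
        have h1 : Tendsto (fun m => ((h' j m χ : ℝ) : ℂ)) atTop
            (𝓝 ((Set.indicator (S j) (fun _ => (1:ℝ)) χ : ℝ) : ℂ)) :=
          (Complex.continuous_ofReal.tendsto _).comp (hh'lim j hj χ)
        have h2 := h1.const_mul (F χ)
        have h3 : F χ * ((Set.indicator (S j) (fun _ => (1:ℝ)) χ : ℝ) : ℂ)
            = Set.indicator (S j) F χ := by
          by_cases hχ : χ ∈ S j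
          · rw [Set.indicator_of_mem hχ, Set.indicator_of_mem hχ]; simp
          · rw [Set.indicator_of_notMem hχ, Set.indicator_of_notMem hχ]; simp
        rwa [h3] at h2
    -- positivity of the partial integrals
    have hposS : ∀ j, j < n → 0 ≤ ∫ ξ in S j, F ξ ∂ν := by
      intro j hj
      have hre : Tendsto (fun m => (∫ χ, F χ * ((h' j m χ : ℝ) : ℂ) ∂ν).re) atTop
          (𝓝 (∫ ξ in S j, F ξ ∂ν).re) := (Complex.continuous_re.tendsto _).comp (climF j hj)
      have him : Tendsto (fun m => (∫ χ, F χ * ((h' j m χ : ℝ) : ℂ) ∂ν).im) atTop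
          (𝓝 (∫ ξ in S j, F ξ ∂ν).im) := (Complex.continuous_im.tendsto _).comp (climF j hj)
      rw [Complex.le_def]
      constructor
      · rw [Complex.zero_re]
        refine ge_of_tendsto hre (Filter.Eventually.of_forall fun m => ?_)
        have := (Complex.le_def.mp (hLh' j m)).1
        rwa [Complex.zero_re] at this
      · rw [Complex.zero_im]
        have h0 : ∀ m, (∫ χ, F χ * ((h' j m χ : ℝ) : ℂ) ∂ν).im = 0 := fun m => by
          have := (Complex.le_def.mp (hLh' j m)).2
          rw [Complex.zero_im] at this
          exact this.symm
        have hT : Tendsto (fun _ : ℕ => (0:ℝ)) atTop (𝓝 (∫ ξ in S j, F ξ ∂ν).im) :=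
          him.congr h0
        exact (tendsto_nhds_unique hT tendsto_const_nhds).symm
    -- the sets Q ∩ S j versus S j
    have cQp_eq : ∀ j, j < n → ∫ ξ in Q ∩ S j, F ξ ∂ν = ∫ ξ in S j, F ξ ∂ν := by
      intro j hj
      rw [← integral_indicator ((hQ.isClosed.measurableSet).inter (hSmeas j)),
        ← integral_indicator (hSmeas j)]
      congr 1
      funext χ
      by_cases hS : χ ∈ S j
      · by_cases hQm : χ ∈ Q
        · rw [Set.indicator_of_mem (Set.mem_inter hQm hS), Set.indicator_of_mem hS]
        · rw [Set.indicator_of_notMem (fun hc => hQm hc.1), Set.indicator_of_mem hS]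
          exact (hF0 χ hQm).symm
      · rw [Set.indicator_of_notMem (fun hc => hS hc.2), Set.indicator_of_notMem hS]
    -- vanishing off the union
    have hvan : ∀ χ, χ ∉ (⋃ j ∈ Finset.range n, S j) → F χ = 0 := by
      intro χ hχ
      by_contra hne
      have hQm : χ ∈ Q := by
        by_contra hq
        exact hne (hF0 χ hq)
      obtain ⟨k, hk⟩ := hUS χ (hQV hQm)
      exact hχ (Set.mem_biUnion (Finset.mem_range.mpr (hSn k χ hk)) hk)
    refine ⟨?_, ?_, ?_⟩
    · intro j
      show 0 ≤ ∫ ξ in Q ∩ S (j : ℕ), F ξ ∂ν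
      rw [cQp_eq j j.2]
      exact hposS j j.2
    · calc ∑ j : Fin n, ∫ ξ in Q ∩ S (j : ℕ), F ξ ∂ν
          = ∑ j : Fin n, ∫ ξ in S (j : ℕ), F ξ ∂ν :=
            Finset.sum_congr rfl fun j _ => cQp_eq j j.2
        _ = ∑ j ∈ Finset.range n, ∫ ξ in S j, F ξ ∂ν :=
            Fin.sum_univ_eq_sum_range (fun j => ∫ ξ in S j, F ξ ∂ν) n
        _ = ∫ ξ in ⋃ j ∈ Finset.range n, S j, F ξ ∂ν :=
            (integral_biUnion_finset (Finset.range n) (fun j _ => hSmeas j)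
              (fun i _ j _ hij => hSdisj i j hij) (fun j _ => hFint.integrableOn)).symm
        _ = ∫ χ, F χ ∂ν := setIntegral_eq_integral_of_forall_compl_eq_zero hvan
        _ = 1 := hone
    · intro g hg
      set w : ℕ → PontryaginDual G → ℂ := fun j χ => (χ g : ℂ) - (χ' j g : ℂ) with hwdef
      have hwcont : ∀ j, Continuous (w j) := fun j => (contEvalC g).sub continuous_const
      have hwbd : ∀ j χ, ‖w j χ‖ ≤ 2 := by
        intro j χ
        calc ‖(χ g : ℂ) - (χ' j g : ℂ)‖ ≤ ‖(χ g : ℂ)‖ + ‖(χ' j g : ℂ)‖ := norm_sub_le _ _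
          _ = 2 := by rw [charNorm, charNorm]; norm_num
      have hwsmall : ∀ j χ, dist (β χ) (β (χ' j)) < ε' → ‖w j χ‖ ≤ ε' := by
        intro j χ hd
        have h1 : dist ((β χ) ⟨g, hg⟩) ((β (χ' j)) ⟨g, hg⟩) ≤ dist (β χ) (β (χ' j)) :=
          ContinuousMap.dist_apply_le_dist _
        rw [hβeval, hβeval, Complex.dist_eq] at h1
        exact le_trans h1 hd.le
      -- the elementary bound for each j, m
      have hbound : ∀ j m, ‖∫ χ, F χ * ((h' j m χ : ℝ) : ℂ) * w j χ ∂ν‖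
          ≤ ε * (∫ χ, F χ * ((h' j m χ : ℝ) : ℂ) ∂ν).re := by
        intro j m
        set L0 : ℂ := ∫ χ, F χ * ((h' j m χ : ℝ) : ℂ) ∂ν with hL0
        have hL0nn : 0 ≤ L0 := hLh' j m
        have hL0re : 0 ≤ L0.re := by
          have := (Complex.le_def.mp hL0nn).1; rwa [Complex.zero_re] at this
        have hL0im : L0.im = 0 := by
          have := (Complex.le_def.mp hL0nn).2; rw [Complex.zero_im] at this; exact this.symm
        have hIntR : ∀ r : PontryaginDual G → ℝ, Continuous r → (∀ χ, |r χ| ≤ 2) →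
            Integrable (fun χ => F χ * ((h' j m χ * r χ : ℝ) : ℂ)) ν := by
          intro r hr hr2
          refine hInt1 _ (Complex.continuous_ofReal.comp ((hh'cont j m).mul hr))
            ⟨2, fun χ => ?_⟩
          rw [Complex.norm_real, Real.norm_eq_abs, abs_mul,
            _root_.abs_of_nonneg (hh'0 j m χ)]
          calc h' j m χ * |r χ| ≤ 1 * 2 :=
                mul_le_mul (hh'1 j m χ) (hr2 χ) (abs_nonneg _) zero_le_one
            _ = 2 := one_mul 2
        have mkZ : ∀ r' : PontryaginDual G → ℝ, Continuous r' → (∀ χ, |r' χ| ≤ 2) →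
            (∀ χ, ψ j m χ ≠ 0 → |r' χ| ≤ ε') →
            0 ≤ (ε' : ℂ) * L0 + ∫ χ, F χ * ((h' j m χ * r' χ : ℝ) : ℂ) ∂ν := by
          intro r' hr' hr2' hrε'
          have hIntY' := hIntR r' hr' hr2'
          have hnn : ∀ χ, 0 ≤ h' j m χ * (ε' + r' χ) := by
            intro χ
            by_cases h0 : h' j m χ = 0
            · rw [h0, zero_mul]
            · have hs := abs_le.mp (hrε' χ (hh'supp j m χ h0))
              exact mul_nonneg (hh'0 j m χ) (by linarith [hs.1])
          have hbd : ∀ χ, h' j m χ * (ε' + r' χ) ≤ ε' + 2 := by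
            intro χ
            have hs := abs_le.mp (hr2' χ)
            have h1 : ε' + r' χ ≤ ε' + 2 := by linarith [hs.2]
            by_cases h0 : 0 ≤ ε' + r' χ
            · calc h' j m χ * (ε' + r' χ) ≤ 1 * (ε' + 2) :=
                  mul_le_mul (hh'1 j m χ) h1 h0 zero_le_one
                _ = ε' + 2 := one_mul _
            · push_neg at h0
              calc h' j m χ * (ε' + r' χ) ≤ 0 :=
                    mul_nonpos_of_nonneg_of_nonpos (hh'0 j m χ) h0.le
                _ ≤ ε' + 2 := by linarith
          have hZ := hL (fun χ => h' j m χ * (ε' + r' χ))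
            ((hh'cont j m).mul (continuous_const.add hr')) hnn ⟨ε' + 2, hbd⟩
          have hsplit : (∫ χ, F χ * ((h' j m χ * (ε' + r' χ) : ℝ) : ℂ) ∂ν)
              = (ε' : ℂ) * L0 + ∫ χ, F χ * ((h' j m χ * r' χ : ℝ) : ℂ) ∂ν := by
            rw [hL0, ← integral_const_mul, ← integral_add
              (((hIntH j m).const_mul _)) hIntY']
            congr 1
            funext χ
            push_cast
            ring
          rwa [hsplit] at hZ
        have key : ∀ r : PontryaginDual G → ℝ, Continuous r → (∀ χ, |r χ| ≤ 2) →
            (∀ χ, ψ j m χ ≠ 0 → |r χ| ≤ ε') →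
            (∫ χ, F χ * ((h' j m χ * r χ : ℝ) : ℂ) ∂ν).im = 0 ∧
            |(∫ χ, F χ * ((h' j m χ * r χ : ℝ) : ℂ) ∂ν).re| ≤ ε' * L0.re := by
          intro r hr hr2 hrε
          have hplus := mkZ r hr hr2 hrε
          have hminus := mkZ (fun χ => - r χ) hr.neg
            (fun χ => by rw [abs_neg]; exact hr2 χ)
            (fun χ hψ => by rw [abs_neg]; exact hrε χ hψ)
          have hnegY : (∫ χ, F χ * ((h' j m χ * (- r χ) : ℝ) : ℂ) ∂ν)
              = - ∫ χ, F χ * ((h' j m χ * r χ : ℝ) : ℂ) ∂ν := by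
            rw [← integral_neg]
            congr 1
            funext χ
            push_cast
            ring
          rw [hnegY] at hminus
          set Y : ℂ := ∫ χ, F χ * ((h' j m χ * r χ : ℝ) : ℂ) ∂ν with hY
          have h1 := Complex.le_def.mp hplus
          have h2 := Complex.le_def.mp hminus
          have e1 : ((ε' : ℂ) * L0 + Y).im = ε' * L0.im + Y.im := by
            simp [Complex.add_im, Complex.mul_im]
          have e2 : ((ε' : ℂ) * L0 + - Y).im = ε' * L0.im + - Y.im := by
            simp [Complex.add_im, Complex.mul_im]
          have e3 : ((ε' : ℂ) * L0 + Y).re = ε' * L0.re + Y.re := by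
            simp [Complex.add_re, Complex.mul_re]
          have e4 : ((ε' : ℂ) * L0 + - Y).re = ε' * L0.re + - Y.re := by
            simp [Complex.add_re, Complex.mul_re]
          constructor
          · have i1 := h1.2
            rw [Complex.zero_im, e1, hL0im] at i1
            linarith [i1.symm.le, i1.symm.ge]
          · have r1 := h1.1
            have r2 := h2.1
            rw [Complex.zero_re, e3] at r1
            rw [Complex.zero_re, e4] at r2
            rw [abs_le]
            constructor <;> linarith
        have habs1 : ∀ χ, |(w j χ).re| ≤ ‖w j χ‖ := fun χ => by
          exact Complex.abs_re_le_norm _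
        have habs2 : ∀ χ, |(w j χ).im| ≤ ‖w j χ‖ := fun χ => by
          exact Complex.abs_im_le_norm _
        have hsupp1 : ∀ χ, ψ j m χ ≠ 0 → ‖w j χ‖ ≤ ε' := fun χ hψ =>
          hwsmall j χ (hψsupp j m χ hψ)
        have k1 := key (fun χ => (w j χ).re) (Complex.continuous_re.comp (hwcont j))
          (fun χ => le_trans (habs1 χ) (hwbd j χ))
          (fun χ hψ => le_trans (habs1 χ) (hsupp1 χ hψ))
        have k2 := key (fun χ => (w j χ).im) (Complex.continuous_im.comp (hwcont j))
          (fun χ => le_trans (habs2 χ) (hwbd j χ))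
          (fun χ hψ => le_trans (habs2 χ) (hsupp1 χ hψ))
        have hIR1 : Integrable (fun χ => F χ * ((h' j m χ * (w j χ).re : ℝ) : ℂ)) ν :=
          hIntR (fun χ => (w j χ).re) (Complex.continuous_re.comp (hwcont j))
            (fun χ => le_trans (habs1 χ) (hwbd j χ))
        have hIR2 : Integrable (fun χ => F χ * ((h' j m χ * (w j χ).im : ℝ) : ℂ)) ν :=
          hIntR (fun χ => (w j χ).im) (Complex.continuous_im.comp (hwcont j))
            (fun χ => le_trans (habs2 χ) (hwbd j χ))
        set Y1 : ℂ := ∫ χ, F χ * ((h' j m χ * (w j χ).re : ℝ) : ℂ) ∂ν with hY1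
        set Y2 : ℂ := ∫ χ, F χ * ((h' j m χ * (w j χ).im : ℝ) : ℂ) ∂ν with hY2
        have hsplitw : (∫ χ, F χ * ((h' j m χ : ℝ) : ℂ) * w j χ ∂ν)
            = Y1 + Y2 * Complex.I := by
          rw [hY1, hY2, ← integral_mul_const, ← integral_add hIR1
            (hIR2.mul_const Complex.I)]
          congr 1
          funext χ
          have hw' : w j χ = ((w j χ).re : ℂ) + ((w j χ).im : ℂ) * Complex.I :=
            (Complex.re_add_im (w j χ)).symm
          calc F χ * ((h' j m χ : ℝ) : ℂ) * w j χ
              = F χ * ((h' j m χ : ℝ) : ℂ)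
                * (((w j χ).re : ℂ) + ((w j χ).im : ℂ) * Complex.I) := by rw [← hw']
            _ = F χ * ((h' j m χ * (w j χ).re : ℝ) : ℂ)
                + F χ * ((h' j m χ * (w j χ).im : ℝ) : ℂ) * Complex.I := by
                push_cast
                ring
        have hnorm1 : ‖Y1‖ ≤ ε' * L0.re := by
          have hY1eq : Y1 = ((Y1.re : ℝ) : ℂ) := Complex.ext rfl (by simp [k1.1])
          rw [hY1eq, Complex.norm_real, Real.norm_eq_abs]
          exact k1.2
        have hnorm2 : ‖Y2‖ ≤ ε' * L0.re := by
          have hY2eq : Y2 = ((Y2.re : ℝ) : ℂ) := Complex.ext rfl (by simp [k2.1])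
          rw [hY2eq, Complex.norm_real, Real.norm_eq_abs]
          exact k2.2
        calc ‖∫ χ, F χ * ((h' j m χ : ℝ) : ℂ) * w j χ ∂ν‖
            = ‖Y1 + Y2 * Complex.I‖ := by rw [hsplitw]
          _ ≤ ‖Y1‖ + ‖Y2 * Complex.I‖ := norm_add_le _ _
          _ = ‖Y1‖ + ‖Y2‖ := by rw [norm_mul, Complex.norm_I, mul_one]
          _ ≤ ε' * L0.re + ε' * L0.re := add_le_add hnorm1 hnorm2
          _ = ε * L0.re := by rw [hε'def]; ring
      -- the per-m bound on the sum
      have hsumbound : ∀ m,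
          ‖∑ j ∈ Finset.range n, ∫ χ, F χ * ((h' j m χ : ℝ) : ℂ) * w j χ ∂ν‖ ≤ ε := by
        intro m
        have hIsum : Integrable (fun χ => F χ
            * ((∑ j ∈ Finset.range n, h' j m χ : ℝ) : ℂ)) ν := by
          refine hInt1 _ (Complex.continuous_ofReal.comp
            (continuous_finset_sum _ fun j _ => hh'cont j m)) ⟨1, fun χ => ?_⟩
          rw [Complex.norm_real, Real.norm_eq_abs, _root_.abs_of_nonneg
            (Finset.sum_nonneg fun j _ => hh'0 j m χ)]
          exact hsum1 m χ
        have hTsum : ∑ j ∈ Finset.range n, (∫ χ, F χ * ((h' j m χ : ℝ) : ℂ) ∂ν).re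
            = (∫ χ, F χ * ((∑ j ∈ Finset.range n, h' j m χ : ℝ) : ℂ) ∂ν).re := by
          rw [show (∫ χ, F χ * ((∑ j ∈ Finset.range n, h' j m χ : ℝ) : ℂ) ∂ν)
              = ∑ j ∈ Finset.range n, ∫ χ, F χ * ((h' j m χ : ℝ) : ℂ) ∂ν from ?_]
          · rw [Complex.re_sum]
          · rw [← integral_finset_sum _ (fun j _ => hIntH j m)]
            congr 1
            funext χ
            rw [Complex.ofReal_sum, Finset.mul_sum]
        have hle1 : (∫ χ, F χ * ((∑ j ∈ Finset.range n, h' j m χ : ℝ) : ℂ) ∂ν).re ≤ 1 := by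
          have hrem := hL (fun χ => 1 - ∑ j ∈ Finset.range n, h' j m χ)
            (continuous_const.sub (continuous_finset_sum _ fun j _ => hh'cont j m))
            (fun χ => by
              show 0 ≤ 1 - ∑ j ∈ Finset.range n, h' j m χ
              linarith [hsum1 m χ])
            ⟨1, fun χ => by
              show 1 - ∑ j ∈ Finset.range n, h' j m χ ≤ 1
              have h0 : 0 ≤ ∑ j ∈ Finset.range n, h' j m χ :=
                Finset.sum_nonneg fun j _ => hh'0 j m χ
              linarith⟩
          have hsplit2 : (∫ χ, F χ * ((1 - ∑ j ∈ Finset.range n, h' j m χ : ℝ) : ℂ) ∂ν)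
              = (∫ χ, F χ ∂ν)
                - ∫ χ, F χ * ((∑ j ∈ Finset.range n, h' j m χ : ℝ) : ℂ) ∂ν := by
            rw [← integral_sub hFint hIsum]
            congr 1
            funext χ
            push_cast
            ring
          rw [hsplit2, hone] at hrem
          have := (Complex.le_def.mp hrem).1
          rw [Complex.zero_re, Complex.sub_re, Complex.one_re] at this
          linarith
        calc ‖∑ j ∈ Finset.range n, ∫ χ, F χ * ((h' j m χ : ℝ) : ℂ) * w j χ ∂ν‖
            ≤ ∑ j ∈ Finset.range n, ‖∫ χ, F χ * ((h' j m χ : ℝ) : ℂ) * w j χ ∂ν‖ :=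
              norm_sum_le _ _
          _ ≤ ∑ j ∈ Finset.range n, ε * (∫ χ, F χ * ((h' j m χ : ℝ) : ℂ) ∂ν).re :=
              Finset.sum_le_sum fun j _ => hbound j m
          _ = ε * ∑ j ∈ Finset.range n, (∫ χ, F χ * ((h' j m χ : ℝ) : ℂ) ∂ν).re := by
              rw [Finset.mul_sum]
          _ ≤ ε * 1 := by
              refine mul_le_mul_of_nonneg_left ?_ hε.le
              rw [hTsum]
              exact hle1
          _ = ε := mul_one ε
      -- limits of the weighted integrals
      have climFw : ∀ j, j < n →
          Tendsto (fun m => ∫ χ, F χ * ((h' j m χ : ℝ) : ℂ) * w j χ ∂ν) atTop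
            (𝓝 (∫ ξ in S j, F ξ * w j ξ ∂ν)) := by
        intro j hj
        rw [← integral_indicator (hSmeas j)]
        refine tendsto_integral_of_dominated_convergence (fun χ => ‖F χ‖ * 2)
          (fun m => (hIntH j m).aestronglyMeasurable.mul (hwcont j).aestronglyMeasurable)
          (hFint.norm.mul_const 2) ?_ ?_
        · intro m
          filter_upwards with χ
          rw [norm_mul, norm_mul, Complex.norm_real, Real.norm_eq_abs,
            _root_.abs_of_nonneg (hh'0 j m χ)]
          have hb1 : ‖F χ‖ * h' j m χ ≤ ‖F χ‖ := by
            calc ‖F χ‖ * h' j m χ ≤ ‖F χ‖ * 1 :=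
                  mul_le_mul_of_nonneg_left (hh'1 j m χ) (norm_nonneg _)
              _ = ‖F χ‖ := mul_one _
          calc ‖F χ‖ * h' j m χ * ‖w j χ‖ ≤ ‖F χ‖ * h' j m χ * 2 :=
                mul_le_mul_of_nonneg_left (hwbd j χ)
                  (mul_nonneg (norm_nonneg _) (hh'0 j m χ))
            _ ≤ ‖F χ‖ * 2 := mul_le_mul_of_nonneg_right hb1 (by norm_num)
        · filter_upwards with χ
          have h1 : Tendsto (fun m => ((h' j m χ : ℝ) : ℂ)) atTop
              (𝓝 ((Set.indicator (S j) (fun _ => (1:ℝ)) χ : ℝ) : ℂ)) :=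
            (Complex.continuous_ofReal.tendsto _).comp (hh'lim j hj χ)
          have h2 := (h1.const_mul (F χ)).mul_const (w j χ)
          have h3 : F χ * ((Set.indicator (S j) (fun _ => (1:ℝ)) χ : ℝ) : ℂ) * w j χ
              = Set.indicator (S j) (fun ξ => F ξ * w j ξ) χ := by
            by_cases hχ : χ ∈ S j
            · rw [Set.indicator_of_mem hχ, Set.indicator_of_mem hχ]; simp
            · rw [Set.indicator_of_notMem hχ, Set.indicator_of_notMem hχ]; simp
          rwa [h3] at h2
      have hZlim : Tendsto
          (fun m => ∑ j ∈ Finset.range n, ∫ χ, F χ * ((h' j m χ : ℝ) : ℂ) * w j χ ∂ν) atTop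
          (𝓝 (∑ j ∈ Finset.range n, ∫ ξ in S j, F ξ * w j ξ ∂ν)) :=
        tendsto_finset_sum _ fun j hj => climFw j (Finset.mem_range.mp hj)
      have hfinal : ‖∑ j ∈ Finset.range n, ∫ ξ in S j, F ξ * w j ξ ∂ν‖ ≤ ε :=
        le_of_tendsto hZlim.norm (Filter.Eventually.of_forall hsumbound)
      -- the representation of the error
      have hrepr : ((f g : ℝ) : ℂ)
          - ∑ j : Fin n, (∫ ξ in Q ∩ S (j : ℕ), F ξ ∂ν) * (χ' (j : ℕ) g : ℂ)
          = ∑ j ∈ Finset.range n, ∫ ξ in S j, F ξ * w j ξ ∂ν := by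
        have hstep1 : ((f g : ℝ) : ℂ)
            = ∫ ξ in ⋃ j ∈ Finset.range n, S j, F ξ * (ξ g : ℂ) ∂ν := by
          rw [hinvf g]
          exact (setIntegral_eq_integral_of_forall_compl_eq_zero (fun χ hχ => by
            rw [hvan χ hχ, zero_mul])).symm
        have hstep2 : (∫ ξ in ⋃ j ∈ Finset.range n, S j, F ξ * (ξ g : ℂ) ∂ν)
            = ∑ j ∈ Finset.range n, ∫ ξ in S j, F ξ * (ξ g : ℂ) ∂ν :=
          integral_biUnion_finset _ (fun j _ => hSmeas j)
            (fun i _ j _ hij => hSdisj i j hij) (fun j _ => (hIntChar g).integrableOn)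
        have hstep3 : ∀ j, j < n → (∫ ξ in Q ∩ S j, F ξ ∂ν) * (χ' j g : ℂ)
            = ∫ ξ in S j, F ξ * (χ' j g : ℂ) ∂ν := by
          intro j hj
          rw [cQp_eq j hj, integral_mul_const]
        calc ((f g : ℝ) : ℂ)
            - ∑ j : Fin n, (∫ ξ in Q ∩ S (j : ℕ), F ξ ∂ν) * (χ' (j : ℕ) g : ℂ)
            = (∑ j ∈ Finset.range n, ∫ ξ in S j, F ξ * (ξ g : ℂ) ∂ν)
              - ∑ j ∈ Finset.range n, ∫ ξ in S j, F ξ * (χ' j g : ℂ) ∂ν := by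
              rw [hstep1, hstep2]
              congr 1
              rw [Fin.sum_univ_eq_sum_range
                (fun j => (∫ ξ in Q ∩ S j, F ξ ∂ν) * (χ' j g : ℂ)) n]
              exact Finset.sum_congr rfl fun j hj => hstep3 j (Finset.mem_range.mp hj)
          _ = ∑ j ∈ Finset.range n, ((∫ ξ in S j, F ξ * (ξ g : ℂ) ∂ν)
                - ∫ ξ in S j, F ξ * (χ' j g : ℂ) ∂ν) := by
              rw [Finset.sum_sub_distrib]
          _ = ∑ j ∈ Finset.range n, ∫ ξ in S j, F ξ * w j ξ ∂ν := by
              refine Finset.sum_congr rfl fun j hj => ?_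
              rw [← integral_sub ((hIntChar g).integrableOn)
                ((hInt1 (fun _ => (χ' j g : ℂ)) continuous_const
                  ⟨1, fun χ => le_of_eq (charNorm _ g)⟩).integrableOn)]
              congr 1
              funext ξ
              simp only [hwdef]
              ring
      show ‖((f g : ℝ) : ℂ)
        - ∑ j : Fin n, (∫ ξ in Q ∩ S (j : ℕ), F ξ ∂ν) * (χ' (j : ℕ) g : ℂ)‖ ≤ ε
      rw [hrepr]
      exact hfinal
end
end

section
/- Let G be a locally compact abelian Hausdorff topological group and H ≤ G an open (hence closed) subgroup of G. If f : H → ℂ is continuous and positive definite on H, then its trivial extension f̃ : G → ℂ, defined by f̃(g) = f(g) for g ∈ H and f̃(g) = 0 otherwise, is continuous and positive definite on G. -/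
open MeasureTheory Filter Topology Complex Classical
open scoped ComplexOrder

noncomputable section

variable {G : Type*}

lemma isPosDefFn_finset [CommGroup G] {f : G → ℂ} (hf : IsPosDefFn f)
    {ι : Type*} (s : Finset ι) (c : ι → ℂ) (g : ι → G) :
    0 ≤ ∑ j ∈ s, ∑ k ∈ s, c j * (starRingEnd ℂ) (c k) * f (g j / g k) := by
  classical
  have h := hf s.card (fun i => c (s.equivFin.symm i)) (fun i => g (s.equivFin.symm i))
  refine le_of_le_of_eq h ?_
  calc ∑ j : Fin s.card, ∑ k : Fin s.card,
        c (s.equivFin.symm j) * (starRingEnd ℂ) (c (s.equivFin.symm k)) *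
          f (g (s.equivFin.symm j) / g (s.equivFin.symm k))
      = ∑ j : {x // x ∈ s}, ∑ k : {x // x ∈ s},
        c j * (starRingEnd ℂ) (c k) * f (g j / g k) := by
        refine Fintype.sum_equiv s.equivFin.symm _ _ (fun j => ?_)
        exact Fintype.sum_equiv s.equivFin.symm _ _ (fun k => rfl)
    _ = ∑ j ∈ s, ∑ k ∈ s, c j * (starRingEnd ℂ) (c k) * f (g j / g k) := by
        rw [← Finset.sum_attach s (fun j => ∑ k ∈ s, c j * (starRingEnd ℂ) (c k) * f (g j / g k))]
        refine Finset.sum_congr rfl (fun j _ => ?_)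
        rw [← Finset.sum_attach s (fun k => c j.1 * (starRingEnd ℂ) (c k) * f (g j.1 / g k))]
        rw [Finset.univ_eq_attach]


/-- the trivial extension of a continuous positive definite function on an
open subgroup is continuous and positive definite on the whole group. -/
theorem posdef_trivial_extension
    [CommGroup G] [TopologicalSpace G] [IsTopologicalGroup G]
    [LocallyCompactSpace G] [T2Space G]
    (H : Subgroup G) (hHopen : IsOpen (H : Set G))
    (f : H → ℂ) (hfc : Continuous f) (hfpd : IsPosDefFn f) :
    Continuous (fun g : G => if hg : g ∈ H then f ⟨g, hg⟩ else 0) ∧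
    IsPosDefFn (fun g : G => if hg : g ∈ H then f ⟨g, hg⟩ else 0) := by
  classical
  constructor
  · have hclosed : IsClosed (H : Set G) := Subgroup.isClosed_of_isOpen H hHopen
    have hOn : ContinuousOn (fun g : G => if hg : g ∈ H then f ⟨g, hg⟩ else 0) (H : Set G) := by
      rw [continuousOn_iff_continuous_restrict]
      have he : ((H : Set G)).domRestrict (fun g : G => if hg : g ∈ H then f ⟨g, hg⟩ else 0)
          = fun x : (H : Set G) => f ⟨x.1, x.2⟩ := funext fun x => dif_pos x.2
      rw [he]
      exact hfc.comp (continuous_subtype_val.subtype_mk fun x => x.2)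
    have hOn' : ContinuousOn (fun g : G => if hg : g ∈ H then f ⟨g, hg⟩ else 0) ((H : Set G)ᶜ) := by
      rw [continuousOn_iff_continuous_restrict]
      have he : (((H : Set G)ᶜ)).domRestrict (fun g : G => if hg : g ∈ H then f ⟨g, hg⟩ else 0)
          = fun _ => 0 := funext fun x => dif_neg x.2
      rw [he]
      exact continuous_const
    rw [continuous_iff_continuousAt]
    intro x
    by_cases hx : x ∈ H
    · exact hOn.continuousAt (hHopen.mem_nhds hx)
    · exact hOn'.continuousAt (hclosed.isOpen_compl.mem_nhds hx)
  · intro n c g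
    set F : G → ℂ := fun g : G => if hg : g ∈ H then f ⟨g, hg⟩ else 0 with hF
    have key1 : ∀ a b : G, (QuotientGroup.mk a : G ⧸ H) = QuotientGroup.mk b ↔ a / b ∈ H := by
      intro a b
      rw [QuotientGroup.eq]
      have h1 : (a⁻¹ * b)⁻¹ = a / b := by
        simp [div_eq_mul_inv, mul_comm]
      rw [← h1, inv_mem_iff]
    have hzero : ∀ j k : Fin n, (QuotientGroup.mk (g j) : G ⧸ H) ≠ QuotientGroup.mk (g k) →
        F (g j / g k) = 0 := fun j k h => dif_neg (fun hm => h ((key1 _ _).2 hm))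
    set Q : Finset (G ⧸ H) := Finset.image (fun j => (QuotientGroup.mk (g j) : G ⧸ H))
      Finset.univ with hQ
    have expand : ∀ j k : Fin n,
        c j * (starRingEnd ℂ) (c k) * F (g j / g k) =
        ∑ q ∈ Q, if QuotientGroup.mk (g j) = q ∧ QuotientGroup.mk (g k) = q
          then c j * (starRingEnd ℂ) (c k) * F (g j / g k) else 0 := by
      intro j k
      by_cases hjk : (QuotientGroup.mk (g j) : G ⧸ H) = QuotientGroup.mk (g k)
      · simp only [← hjk, and_self]
        rw [Finset.sum_ite_eq Q (QuotientGroup.mk (g j)) _,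
          if_pos (Finset.mem_image_of_mem _ (Finset.mem_univ j))]
      · rw [hzero j k hjk, mul_zero]
        symm
        refine Finset.sum_eq_zero fun q _ => ?_
        rw [if_neg]
        rintro ⟨h1, h2⟩
        exact hjk (h1.trans h2.symm)
    have step1 : ∑ j, ∑ k, c j * (starRingEnd ℂ) (c k) * F (g j / g k)
        = ∑ q ∈ Q,
            ∑ j ∈ Finset.univ.filter (fun j => (QuotientGroup.mk (g j) : G ⧸ H) = q),
            ∑ k ∈ Finset.univ.filter (fun k => (QuotientGroup.mk (g k) : G ⧸ H) = q),
            c j * (starRingEnd ℂ) (c k) * F (g j / g k) := by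
      calc ∑ j, ∑ k, c j * (starRingEnd ℂ) (c k) * F (g j / g k)
          = ∑ j, ∑ k, ∑ q ∈ Q, if QuotientGroup.mk (g j) = q ∧ QuotientGroup.mk (g k) = q
              then c j * (starRingEnd ℂ) (c k) * F (g j / g k) else 0 :=
            Finset.sum_congr rfl fun j _ => Finset.sum_congr rfl fun k _ => expand j k
        _ = ∑ j, ∑ q ∈ Q, ∑ k, if QuotientGroup.mk (g j) = q ∧ QuotientGroup.mk (g k) = q
              then c j * (starRingEnd ℂ) (c k) * F (g j / g k) else 0 :=
            Finset.sum_congr rfl fun j _ => Finset.sum_comm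
        _ = ∑ q ∈ Q, ∑ j, ∑ k, if QuotientGroup.mk (g j) = q ∧ QuotientGroup.mk (g k) = q
              then c j * (starRingEnd ℂ) (c k) * F (g j / g k) else 0 := Finset.sum_comm
        _ = ∑ q ∈ Q,
            ∑ j ∈ Finset.univ.filter (fun j => (QuotientGroup.mk (g j) : G ⧸ H) = q),
            ∑ k ∈ Finset.univ.filter (fun k => (QuotientGroup.mk (g k) : G ⧸ H) = q),
            c j * (starRingEnd ℂ) (c k) * F (g j / g k) := by
            refine Finset.sum_congr rfl fun q _ => ?_
            rw [Finset.sum_filter]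
            refine Finset.sum_congr rfl fun j _ => ?_
            rw [Finset.sum_filter]
            by_cases hA : (QuotientGroup.mk (g j) : G ⧸ H) = q <;> simp [hA]
    rw [step1]
    refine Finset.sum_nonneg fun q hq => ?_
    obtain ⟨j0, -, hj0⟩ := Finset.mem_image.mp hq
    set s := Finset.univ.filter (fun j => (QuotientGroup.mk (g j) : G ⧸ H) = q) with hs
    have hmem : ∀ j ∈ s, g j / g j0 ∈ H := by
      intro j hj
      rw [← key1]
      rw [hs, Finset.mem_filter] at hj
      rw [hj.2, hj0]
    set g' : Fin n → H := fun j => if h : g j / g j0 ∈ H then (⟨g j / g j0, h⟩ : H) else 1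
      with hg'
    refine le_of_le_of_eq (isPosDefFn_finset hfpd s c g') ?_
    refine Finset.sum_congr rfl fun j hj => Finset.sum_congr rfl fun k hk => ?_
    congr 1
    have hj' := hmem j hj
    have hk' := hmem k hk
    have hjkH : g j / g k ∈ H := by
      rw [← key1]
      rw [hs, Finset.mem_filter] at hj hk
      rw [hj.2, hk.2]
    have hval : g' j / g' k = (⟨g j / g k, hjkH⟩ : H) := by
      apply Subtype.ext
      have e1 : g' j = (⟨g j / g j0, hj'⟩ : H) := dif_pos hj'
      have e2 : g' k = (⟨g k / g j0, hk'⟩ : H) := dif_pos hk'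
      rw [e1, e2]
      show (g j / g j0) / (g k / g j0) = g j / g k
      exact div_div_div_cancel_right _ _ _
    rw [hval]
    simp only [hF]
    rw [dif_pos hjkH]


end
end

section
/- Let G be a locally compact abelian Hausdorff topological group, G₀ ≤ G an open subgroup, and Q ⊆ Ĝ a compact subset of the dual group. Then the set Q* := { γ ∈ Ĝ₀ : every character χ ∈ Ĝ with χ|_{G₀} = γ lies in Q } is a compact subset of Ĝ₀. (In particular, Q* is a closed subset of the compact set Q₀ := { χ|_{G₀} : χ ∈ Q }, since the restriction map Φ : Ĝ → Ĝ₀, χ ↦ χ|_{G₀}, is continuous and open.) -/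
open MeasureTheory Filter Topology Complex
open scoped ComplexOrder

noncomputable section

variable {G : Type*}

/-- The circle group is divisible (additively). -/
noncomputable instance additiveCircleDivisible : DivisibleBy (Additive Circle) ℤ where
  div a n := if n = 0 then 0 else
    Additive.ofMul (Circle.exp (Complex.arg (Additive.toMul a : Circle) / n))
  div_zero a := by simp
  div_cancel {n} a hn := by
    have hexp_zpow : ∀ (t : ℝ) (m : ℤ), (Circle.exp t) ^ m = Circle.exp (m * t) := by
      intro t m
      have h := map_zsmul Circle.expHom m t
      have h2 : Circle.expHom (m • t) = Additive.ofMul (Circle.exp (m • t)) := rfl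
      have h3 : m • Circle.expHom t = m • Additive.ofMul (Circle.exp t) := rfl
      rw [h2, h3, ← ofMul_zpow] at h
      have := Additive.ofMul.injective h
      rw [← this, zsmul_eq_mul]
    simp only [if_neg hn]
    rw [← ofMul_zpow, hexp_zpow]
    have : (n : ℝ) ≠ 0 := Int.cast_ne_zero.mpr hn
    rw [mul_div_cancel₀ _ this, Circle.exp_arg]
    simp

/-- Every continuous character of an open subgroup extends to the whole group. -/
theorem pontryaginDual_exists_extension
    [CommGroup G] [TopologicalSpace G] [IsTopologicalGroup G]
    (G₀ : Subgroup G) (hG₀open : IsOpen (G₀ : Set G)) (γ : PontryaginDual G₀) :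
    ∃ χ : PontryaginDual G, ∀ g : G₀, χ (g : G) = γ g := by
  have hbaer : Module.Baer ℤ (Additive Circle) := Module.Baer.of_divisible _
  have hinj : Function.Injective (MonoidHom.toAdditive G₀.subtype) := by
    intro a b hab
    exact Additive.toMul.injective (Subtype.ext (congrArg Additive.toMul hab))
  obtain ⟨h, hh⟩ := hbaer.extension_property_addMonoidHom
    (MonoidHom.toAdditive G₀.subtype) hinj
    (MonoidHom.toAdditive (γ.toMonoidHom))
  set χ₀ : G →* Circle := MonoidHom.toAdditive.symm h with hχ₀
  have hext : ∀ g : G₀, χ₀ (g : G) = γ g := by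
    intro g
    have := DFunLike.congr_fun hh (Additive.ofMul g)
    exact Additive.ofMul.injective this
  have hcont : Continuous χ₀ := by
    apply continuous_of_continuousAt_one χ₀
    have hOn : ContinuousOn χ₀ (G₀ : Set G) := by
      rw [continuousOn_iff_continuous_restrict]
      have hres : Set.domRestrict (G₀ : Set G) χ₀ = fun x => γ ⟨x.1, x.2⟩ :=
        funext fun x => hext ⟨x.1, x.2⟩
      rw [hres]
      exact (map_continuous γ).comp (continuous_subtype_val.subtype_mk _)
    exact hOn.continuousAt (hG₀open.mem_nhds G₀.one_mem)
  exact ⟨⟨χ₀, hcont⟩, hext⟩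

/-- for an open subgroup `G₀ ≤ G` and a compact `Q ⊆ Ĝ`, the set
`Q* = {γ ∈ Ĝ₀ : every extension of γ to G lies in Q}` is compact in `Ĝ₀`. -/
theorem qstar_isCompact
    [CommGroup G] [TopologicalSpace G] [IsTopologicalGroup G]
    [LocallyCompactSpace G] [T2Space G]
    (G₀ : Subgroup G) (hG₀open : IsOpen (G₀ : Set G))
    (Q : Set (PontryaginDual G)) (hQ : IsCompact Q) :
    IsCompact {γ : PontryaginDual G₀ |
      ∀ χ : PontryaginDual G, (∀ g : G₀, χ (g : G) = γ g) → χ ∈ Q} := by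
  classical
  set ι : ContinuousMonoidHom G₀ G := ⟨G₀.subtype, continuous_subtype_val⟩ with hι
  set Φ := PontryaginDual.map ι with hΦ
  -- the saturated preimage
  set T : Set (PontryaginDual G) :=
    {χ | ∀ χ' : PontryaginDual G, (∀ g : G₀, χ' (g : G) = χ (g : G)) → χ' ∈ Q} with hT
  have hmul : ∀ (χ κ : PontryaginDual G) (g : G), (χ * κ) g = χ g * κ g := fun _ _ _ => rfl
  have hTeq : T = ⋂ κ ∈ {κ : PontryaginDual G | ∀ g : G₀, κ (g : G) = 1},
      (· * κ) ⁻¹' Q := by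
    ext χ
    simp only [hT, Set.mem_setOf_eq, Set.mem_iInter, Set.mem_preimage]
    constructor
    · intro hχ κ hκ
      refine hχ (χ * κ) fun g => ?_
      rw [hmul, hκ g, mul_one]
    · intro hχ χ' hagree
      have hκ : ∀ g : G₀, (χ' * χ⁻¹) (g : G) = 1 := by
        intro g
        have : (χ' * χ⁻¹) (g : G) = χ' (g : G) * (χ (g : G))⁻¹ := rfl
        rw [this, hagree g, mul_inv_cancel]
      have := hχ (χ' * χ⁻¹) hκ
      have heq : χ * (χ' * χ⁻¹) = χ' := by
        rw [mul_comm χ' χ⁻¹, ← mul_assoc, mul_inv_cancel, one_mul]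
      rwa [heq] at this
  have hTclosed : IsClosed T := by
    rw [hTeq]
    exact isClosed_biInter fun κ _ => hQ.isClosed.preimage (continuous_mul_right κ)
  have hTsubQ : T ⊆ Q := fun χ hχ => hχ χ (fun _ => rfl)
  have hTcompact : IsCompact T := hQ.of_isClosed_subset hTclosed hTsubQ
  have himage : {γ : PontryaginDual G₀ |
      ∀ χ : PontryaginDual G, (∀ g : G₀, χ (g : G) = γ g) → χ ∈ Q} = Φ '' T := by
    ext γ
    constructor
    · intro hγ
      obtain ⟨χ, hχext⟩ := pontryaginDual_exists_extension G₀ hG₀open γ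
      refine ⟨χ, ?_, ?_⟩
      · intro χ' hagree
        exact hγ χ' fun g => (hagree g).trans (hχext g)
      · exact DFunLike.ext _ _ fun g => hχext g
    · rintro ⟨χ, hχT, rfl⟩
      intro χ' hagree
      exact hχT χ' hagree
  rw [himage]
  exact hTcompact.image (map_continuous Φ)

end
end

section
/- Let G be a locally compact abelian Hausdorff topological group, W ⊆ G closed with positive, finite Haar measure, Q ⊆ Ĝ compact, G₀ ≤ G an open subgroup containing W with Haar measure λ_{G₀} = λ_G|_{G₀}, and Q* := { γ ∈ Ĝ₀ : every χ ∈ Ĝ with χ|_{G₀} = γ lies in Q }. Then for a function h⁰ : G₀ → ℂ with trivial extension h : G → ℂ (h = h⁰ on G₀ and h = 0 off G₀), one has h⁰ ∈ 𝒢(W,Q*)_{G₀} if and only if h ∈ 𝒢(W,Q)_G. -/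
open MeasureTheory Filter Topology Complex Classical
open scoped ComplexOrder

noncomputable section

variable {G : Type*}

/-! ### Auxiliary lemmas -/

section PosDef

variable [CommGroup G]

/-- Positive definiteness passes to trivial extensions. -/
theorem isPosDefFn_extension (G₀ : Subgroup G)
    (h0 : G₀ → ℂ) (h : G → ℂ)
    (hext : ∀ g : G, h g = if hg : g ∈ G₀ then h0 ⟨g, hg⟩ else 0)
    (hpd : IsPosDefFn h0) : IsPosDefFn h := by
  intro n c g
  classical
  set q : Fin n → G ⧸ G₀ := fun j => QuotientGroup.mk (g j) with hqdef
  have hmem : ∀ (j : Fin n) (t : G ⧸ G₀), q j = t ↔ g j / Quotient.out t ∈ G₀ := by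
    intro j t
    have h1 : g j / Quotient.out t = ((g j)⁻¹ * Quotient.out t)⁻¹ := by
      rw [mul_inv_rev, inv_inv, div_eq_mul_inv]; exact mul_comm _ _
    constructor
    · intro hqt
      have h2 : (QuotientGroup.mk (g j) : G ⧸ G₀) = QuotientGroup.mk (Quotient.out t) := by
        rw [show (QuotientGroup.mk (g j) : G ⧸ G₀) = t from hqt]
        exact (QuotientGroup.out_eq' t).symm
      rw [QuotientGroup.eq] at h2
      rw [h1]
      exact inv_mem h2
    · intro hm
      have h2 : (g j)⁻¹ * Quotient.out t ∈ G₀ := by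
        have := inv_mem hm
        rwa [h1, inv_inv] at this
      calc q j = QuotientGroup.mk (g j) := rfl
        _ = QuotientGroup.mk (Quotient.out t) := (QuotientGroup.eq).mpr h2
        _ = t := QuotientGroup.out_eq' t
  have hsame : ∀ j k : Fin n, g j / g k ∈ G₀ ↔ q j = q k := by
    intro j k
    have h1 : g j / g k = ((g j)⁻¹ * g k)⁻¹ := by
      rw [mul_inv_rev, inv_inv, div_eq_mul_inv]; exact mul_comm _ _
    rw [h1, inv_mem_iff]
    exact (QuotientGroup.eq).symm
  set f : Fin n → Fin n → ℂ :=
    fun j k => c j * (starRingEnd ℂ) (c k) * h (g j / g k) with hfdef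
  set T : Finset (G ⧸ G₀) := Finset.univ.image q with hTdef
  have key : ∀ t : G ⧸ G₀,
      (0:ℂ) ≤ ∑ j, ∑ k, (if q j = t ∧ q k = t then f j k else 0) := by
    intro t
    set c' : Fin n → ℂ := fun j => if q j = t then c j else 0 with hc'
    set s : Fin n → G₀ := fun j =>
      if hj : g j / Quotient.out t ∈ G₀ then ⟨g j / Quotient.out t, hj⟩ else 1 with hs
    have hple := hpd n c' s
    refine le_of_le_of_eq hple
      (Finset.sum_congr rfl fun j _ => Finset.sum_congr rfl fun k _ => ?_).symm
    by_cases hj : q j = t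
    · by_cases hk : q k = t
      · have hjm := (hmem j t).mp hj
        have hkm := (hmem k t).mp hk
        have hsj : s j = ⟨g j / Quotient.out t, hjm⟩ := by
          simp only [hs]; rw [dif_pos hjm]
        have hsk : s k = ⟨g k / Quotient.out t, hkm⟩ := by
          simp only [hs]; rw [dif_pos hkm]
        have hdiv : ((s j / s k : G₀) : G) = g j / g k := by
          rw [hsj, hsk]
          show (g j / Quotient.out t) / (g k / Quotient.out t) = g j / g k
          exact div_div_div_cancel_right _ _ _
        have hmemjk : g j / g k ∈ G₀ := by
          rw [← hdiv]; exact SetLike.coe_mem _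
        have hhh : h (g j / g k) = h0 (s j / s k) := by
          rw [hext, dif_pos hmemjk]
          exact congrArg h0 (Subtype.ext hdiv.symm)
        simp only [hc', if_pos hj, if_pos hk, if_pos (And.intro hj hk), hfdef, hhh]
      · simp [hc', hj, hk]
    · simp [hc', hj]
  have heq : (∑ t ∈ T, ∑ j, ∑ k, (if q j = t ∧ q k = t then f j k else 0))
      = ∑ j, ∑ k, f j k := by
    rw [Finset.sum_comm]
    refine Finset.sum_congr rfl fun j _ => ?_
    rw [Finset.sum_comm]
    refine Finset.sum_congr rfl fun k _ => ?_
    rw [Finset.sum_eq_single_of_mem (q j)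
      (Finset.mem_image_of_mem q (Finset.mem_univ j))
      (fun b _ hb => if_neg fun hc => hb hc.1.symm)]
    by_cases hjk : q k = q j
    · rw [if_pos ⟨rfl, hjk⟩]
    · rw [if_neg fun hc => hjk hc.2]
      have hng : ¬ g j / g k ∈ G₀ := fun hm => hjk ((hsame j k).mp hm).symm
      have : f j k = 0 := by
        simp only [hfdef, hext (g j / g k), dif_neg hng, mul_zero]
      rw [this]
  calc (0:ℂ) ≤ ∑ t ∈ T, ∑ j, ∑ k, (if q j = t ∧ q k = t then f j k else 0) :=
        Finset.sum_nonneg fun t _ => key t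
    _ = ∑ j, ∑ k, f j k := heq

end PosDef

section Dual

variable [CommGroup G] [TopologicalSpace G] [IsTopologicalGroup G]

/-- The inclusion of a subgroup as a continuous monoid hom. -/
def inclCMH (G₀ : Subgroup G) : ContinuousMonoidHom G₀ G :=
  ⟨G₀.subtype, continuous_subtype_val⟩

/-- The restriction map on Pontryagin duals. -/
def resD (G₀ : Subgroup G) :
    ContinuousMonoidHom (PontryaginDual G) (PontryaginDual G₀) :=
  PontryaginDual.map (inclCMH G₀)

@[simp] theorem resD_apply (G₀ : Subgroup G) (χ : PontryaginDual G) (x : G₀) :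
    resD G₀ χ x = χ (x : G) := rfl

/-- Every continuous character of an open subgroup extends to the whole group. -/
theorem exists_pontryaginDual_extension (G₀ : Subgroup G)
    (hG₀open : IsOpen (G₀ : Set G)) (γ : PontryaginDual G₀) :
    ∃ χ : PontryaginDual G, ∀ x : G₀, χ (x : G) = γ x := by
  haveI : DivisibleBy (Additive Circle) ℤ := by
    refine Function.Surjective.divisibleBy ⇑Circle.expHom ?_
      (fun a n => map_zsmul Circle.expHom n a)
    intro z
    exact ⟨Complex.arg (Additive.toMul z : Circle),
      congrArg Additive.ofMul (Circle.exp_arg (Additive.toMul z))⟩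
  obtain ⟨H, hH⟩ := (Module.Baer.of_divisible (Additive Circle)).extension_property_addMonoidHom
    (MonoidHom.toAdditive G₀.subtype)
    (by
      intro a b hab
      have h2 : ((Additive.toMul a : G₀) : G) = ((Additive.toMul b : G₀) : G) :=
        congrArg Additive.toMul hab
      exact congrArg Additive.ofMul (Subtype.ext h2))
    (MonoidHom.toAdditive γ.toMonoidHom)
  set χm : G →* Circle := MonoidHom.toAdditive.symm H with hχm
  have hagree : ∀ x : G₀, χm (x : G) = γ x := by
    intro x
    have := DFunLike.congr_fun hH (Additive.ofMul x)
    exact congrArg Additive.toMul this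
  have hcont : Continuous χm := by
    apply continuous_of_continuousAt_one χm
    have hk : ContinuousAt
        (fun x : G => if hx : x ∈ G₀ then (γ ⟨x, hx⟩ : Circle) else 1) 1 := by
      apply ContinuousOn.continuousAt _ (hG₀open.mem_nhds G₀.one_mem)
      rw [continuousOn_iff_continuous_restrict]
      have hres : (Set.domRestrict (G₀ : Set G)
          (fun x : G => if hx : x ∈ G₀ then (γ ⟨x, hx⟩ : Circle) else 1))
          = fun x : (G₀ : Set G) => (γ ⟨x.1, x.2⟩ : Circle) := by
        funext x
        exact dif_pos x.2
      rw [hres]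
      exact (map_continuous γ).comp (continuous_subtype_val.subtype_mk _)
    apply hk.congr
    refine Filter.eventuallyEq_of_mem (hG₀open.mem_nhds G₀.one_mem) fun x hx => ?_
    rw [dif_pos (show x ∈ G₀ from hx)]
    exact (hagree ⟨x, hx⟩).symm
  exact ⟨(⟨χm, hcont⟩ : ContinuousMonoidHom G Circle), hagree⟩

/-- The restriction map on duals is a closed map when the subgroup is open. -/
theorem resD_isClosedMap [LocallyCompactSpace G] (G₀ : Subgroup G)
    (hG₀open : IsOpen (G₀ : Set G)) :
    IsClosedMap (⇑(resD G₀) : PontryaginDual G → PontryaginDual G₀) := by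
  haveI : LocallyCompactSpace G₀ := hG₀open.locallyCompactSpace
  suffices hproper : IsProperMap (⇑(resD G₀)) from hproper.isClosedMap
  rw [isProperMap_iff_isCompact_preimage]
  refine ⟨map_continuous (resD G₀), fun K hK => ?_⟩
  set E : Set (PontryaginDual G) := ⇑(resD G₀) ⁻¹' K with hEdef
  -- Functions in `K` are simultaneously equicontinuous at `1`
  have hKeq1 : ∀ U ∈ uniformity Circle, ∃ W ∈ 𝓝 (1 : G₀),
      ∀ x ∈ W, ∀ γ ∈ K, ((1 : Circle), γ x) ∈ U := by
    intro U hU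
    have hball : {z : Circle | ((1 : Circle), z) ∈ U} ∈ 𝓝 (1 : Circle) :=
      UniformSpace.ball_mem_nhds (1 : Circle) hU
    have heval : Continuous fun p : (PontryaginDual G₀) × G₀ => p.1 p.2 := by
      have h1 : Continuous fun p : C(G₀, Circle) × G₀ => p.1 p.2 :=
        ContinuousEval.continuous_eval
      exact h1.comp
        (((ContinuousMonoidHom.isInducing_toContinuousMap _ _).continuous).prodMap
          continuous_id)
    have hchoice : ∀ γ ∈ K, ∃ N : Set (PontryaginDual G₀), IsOpen N ∧ γ ∈ N ∧
        ∃ W ∈ 𝓝 (1 : G₀), ∀ δ ∈ N, ∀ x ∈ W, ((1 : Circle), δ x) ∈ U := by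
      intro γ hγ
      have hc : ContinuousAt (fun p : (PontryaginDual G₀) × G₀ => p.1 p.2) (γ, 1) :=
        heval.continuousAt
      have hmem : {z : Circle | ((1 : Circle), z) ∈ U}
          ∈ 𝓝 ((fun p : (PontryaginDual G₀) × G₀ => p.1 p.2) (γ, 1)) := by
        simpa [map_one] using hball
      have h2 := hc hmem
      rw [Filter.mem_map, nhds_prod_eq, Filter.mem_prod_iff] at h2
      obtain ⟨N, hN, W, hW, hNW⟩ := h2
      obtain ⟨N', hN'sub, hN'o, hγN'⟩ := mem_nhds_iff.mp hN
      exact ⟨N', hN'o, hγN', W, hW, fun δ hδ x hx =>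
        hNW (Set.mk_mem_prod (hN'sub hδ) hx)⟩
    choose N hNo hNm W hWm hprop using hchoice
    obtain ⟨t, ht⟩ := hK.elim_nhds_subcover' (fun γ hγ => N γ hγ)
      (fun γ hγ => (hNo γ hγ).mem_nhds (hNm γ hγ))
    refine ⟨⋂ γ ∈ t, W γ.1 γ.2, (Filter.biInter_finset_mem t).mpr fun γ _ => hWm γ.1 γ.2, ?_⟩
    intro x hx γ hγ
    obtain ⟨γ₀, hγ₀⟩ := Set.mem_iUnion.mp (ht hγ)
    obtain ⟨hγ₀t, hγN⟩ := Set.mem_iUnion.mp hγ₀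
    refine hprop γ₀.1 γ₀.2 γ hγN x ?_
    have := Set.mem_iInter.mp hx γ₀
    exact Set.mem_iInter.mp this hγ₀t
  -- hence `E` is equicontinuous
  have hEeq : EquicontinuousAt (fun χ : E => (⇑(χ : PontryaginDual G) : G → Circle))
      (1 : G) := by
    intro U hU
    obtain ⟨W, hW, hWp⟩ := hKeq1 U hU
    rw [nhds_subtype_eq_comap, Filter.mem_comap] at hW
    obtain ⟨V, hV, hVW⟩ := hW
    refine Filter.eventually_iff_exists_mem.mpr
      ⟨V ∩ G₀, Filter.inter_mem hV (hG₀open.mem_nhds G₀.one_mem), ?_⟩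
    rintro x ⟨hxV, hxG₀⟩ ⟨χ, hχ⟩
    show ((χ : PontryaginDual G) 1, (χ : PontryaginDual G) x) ∈ U
    rw [map_one]
    have hrw : χ x = (resD G₀ χ) ⟨x, hxG₀⟩ := rfl
    rw [hrw]
    exact hWp ⟨x, hxG₀⟩ (hVW (show ((⟨x, hxG₀⟩ : G₀) : G) ∈ V from hxV)) _ hχ
  have hEequi : Equicontinuous (fun χ : E => (⇑(χ : PontryaginDual G) : G → Circle)) :=
    equicontinuous_of_equicontinuousAt_one (fun χ : E => (χ : PontryaginDual G)) hEeq
  -- Arzelà–Ascoli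
  set S : Set C(G, Circle) := ContinuousMonoidHom.toContinuousMap '' E with hSdef
  have hS1 : IsCompact (ContinuousMap.toFun '' S) := by
    set A : Set (G → Circle) := {f | ∀ a b : G, f (a * b) = f a * f b} with hAdef
    set M : Set (G₀ → Circle) := (fun γ : PontryaginDual G₀ => ⇑γ) '' K with hMdef
    set B : Set (G → Circle) := (fun f : G → Circle => fun x : G₀ => f x) ⁻¹' M with hBdef
    have hSAB : ContinuousMap.toFun '' S = A ∩ B := by
      apply Set.Subset.antisymm
      · rintro _ ⟨_, ⟨χ, hχE, rfl⟩, rfl⟩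
        refine ⟨fun a b => map_mul χ a b, ?_⟩
        exact ⟨resD G₀ χ, hχE, rfl⟩
      · rintro f ⟨hfA, hfB⟩
        obtain ⟨γ, hγK, hγf⟩ := hfB
        set fm : G →* Circle := MonoidHom.mk' f hfA with hfm
        have hfcont : Continuous f := by
          apply continuous_of_continuousAt_one fm
          have hk : ContinuousOn f (G₀ : Set G) := by
            rw [continuousOn_iff_continuous_restrict]
            have hres : Set.domRestrict (G₀ : Set G) f
                = fun x : (G₀ : Set G) => γ ⟨x.1, x.2⟩ := by
              funext x
              exact (congrFun hγf ⟨x.1, x.2⟩).symm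
            rw [hres]
            exact (map_continuous γ).comp (continuous_subtype_val.subtype_mk _)
          exact hk.continuousAt (hG₀open.mem_nhds G₀.one_mem)
        set χ : ContinuousMonoidHom G Circle := ⟨fm, hfcont⟩ with hχ
        have hχE : χ ∈ E := by
          have : resD G₀ χ = γ := DFunLike.ext _ _ fun x => (congrFun hγf x).symm
          show resD G₀ χ ∈ K
          rw [this]; exact hγK
        exact ⟨ContinuousMonoidHom.toContinuousMap χ, ⟨χ, hχE, rfl⟩, rfl⟩
    rw [hSAB]
    have hAclosed : IsClosed A := by
      have : A = ⋂ (a : G) (b : G), {f : G → Circle | f (a * b) = f a * f b} := by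
        ext f; simp [hAdef, Set.mem_iInter]
      rw [this]
      refine isClosed_iInter fun a => isClosed_iInter fun b => isClosed_eq ?_ ?_
      · exact continuous_apply (a * b)
      · exact ((continuous_apply a).mul (continuous_apply b))
    have hMcompact : IsCompact M := by
      apply hK.image
      have : Continuous fun f : C(G₀, Circle) => (⇑f : G₀ → Circle) :=
        continuous_coeFun
      exact this.comp (ContinuousMonoidHom.isInducing_toContinuousMap _ _).continuous
    have hBclosed : IsClosed B := by
      refine IsClosed.preimage ?_ hMcompact.isClosed
      exact continuous_pi fun x => continuous_apply (x : G)
    exact (hAclosed.inter hBclosed).isCompact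
  have hS2 : Equicontinuous fun x : S => (⇑(x : C(G, Circle)) : G → Circle) := by
    have := hEequi.comp (fun s : S => (⟨s.2.choose, s.2.choose_spec.1⟩ : E))
    have hfe : ((fun χ : E => (⇑(χ : PontryaginDual G) : G → Circle)) ∘
        (fun s : S => (⟨s.2.choose, s.2.choose_spec.1⟩ : E)))
        = fun x : S => (⇑(x : C(G, Circle)) : G → Circle) := by
      funext s
      have h1 := s.2.choose_spec.2
      change ⇑(s.2.choose) = _
      rw [show ⇑(s.2.choose) = ⇑(ContinuousMonoidHom.toContinuousMap s.2.choose) from rfl, h1]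
    rwa [hfe] at this
  have hScompact : IsCompact S := ArzelaAscoli.isCompact_of_equicontinuous S hS1 hS2
  exact (ContinuousMonoidHom.isInducing_toContinuousMap G Circle).isCompact_iff.mpr hScompact

end Dual

section Transfer

variable [CommGroup G] [TopologicalSpace G] [MeasurableSpace G]

theorem integral_comap_eq {E : Type*} [NormedAddCommGroup E] [NormedSpace ℝ E]
    (μ : Measure G) (G₀ : Subgroup G) (hGm : MeasurableSet (G₀ : Set G))
    (f : G → E) (hf : ∀ g, g ∉ G₀ → f g = 0) :
    ∫ x : G₀, f (x : G) ∂(μ.comap (Subtype.val : G₀ → G)) = ∫ g, f g ∂μ := by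
  have hme : MeasurableEmbedding (Subtype.val : G₀ → G) :=
    MeasurableEmbedding.subtype_coe hGm
  rw [← hme.integral_map, hme.map_comap, Subtype.range_coe]
  have hind : f = (G₀ : Set G).indicator f := by
    funext g
    by_cases hg : g ∈ G₀
    · rw [Set.indicator_of_mem hg]
    · rw [Set.indicator_of_notMem hg, hf g hg]
  conv_rhs => rw [hind]
  rw [MeasureTheory.integral_indicator hGm]

theorem integrable_comap_iff {E : Type*} [NormedAddCommGroup E]
    (μ : Measure G) (G₀ : Subgroup G) (hGm : MeasurableSet (G₀ : Set G))
    (f : G → E) (hf : ∀ g, g ∉ G₀ → f g = 0) :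
    Integrable (fun x : G₀ => f (x : G)) (μ.comap (Subtype.val : G₀ → G))
      ↔ Integrable f μ := by
  have hme : MeasurableEmbedding (Subtype.val : G₀ → G) :=
    MeasurableEmbedding.subtype_coe hGm
  have h1 : Integrable (fun x : G₀ => f (x : G)) (μ.comap (Subtype.val : G₀ → G))
      ↔ Integrable f (Measure.map (Subtype.val : G₀ → G)
          (μ.comap (Subtype.val : G₀ → G))) := (hme.integrable_map_iff).symm
  rw [h1, hme.map_comap, Subtype.range_coe]
  have hind : f = (G₀ : Set G).indicator f := by
    funext g
    by_cases hg : g ∈ G₀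
    · rw [Set.indicator_of_mem hg]
    · rw [Set.indicator_of_notMem hg, hf g hg]
  constructor
  · intro hint
    rw [hind]
    exact (integrable_indicator_iff hGm).mpr hint
  · intro hint
    rw [hind] at hint
    exact (integrable_indicator_iff hGm).mp hint

end Transfer

/-- a function `h⁰` on an open subgroup `G₀ ⊇ W` belongs to
`𝒢(W,Q*)_{G₀}` if and only if its trivial extension `h` belongs to `𝒢(W,Q)_G`. -/
theorem gclass_subgroup_iff_extension
    [CommGroup G] [TopologicalSpace G] [IsTopologicalGroup G]
    [LocallyCompactSpace G] [T2Space G] [MeasurableSpace G] [BorelSpace G]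
    (μ : Measure G) [μ.IsHaarMeasure]
    (W : Set G) (hWclosed : IsClosed W) (hWpos : 0 < μ W) (hWfin : μ W < ⊤)
    (Q : Set (PontryaginDual G)) (hQ : IsCompact Q)
    (G₀ : Subgroup G) (hG₀open : IsOpen (G₀ : Set G)) (hWG₀ : W ⊆ G₀)
    (h0 : G₀ → ℝ) (h : G → ℝ)
    (hext : ∀ g : G, h g = if hg : g ∈ G₀ then h0 ⟨g, hg⟩ else 0) :
    h0 ∈ gclass (μ.comap (Subtype.val : G₀ → G)) ((Subtype.val : G₀ → G) ⁻¹' W)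
        {γ : PontryaginDual G₀ |
          ∀ χ : PontryaginDual G, (∀ g : G₀, χ (g : G) = γ g) → χ ∈ Q} ↔
    h ∈ gclass μ W Q := by
  classical
  have hGm : MeasurableSet (G₀ : Set G) := hG₀open.measurableSet
  have hG₀closed : IsClosed (G₀ : Set G) := G₀.isClosed_of_isOpen hG₀open
  have hval : ∀ x : G₀, h (x : G) = h0 x := by
    intro x
    rw [hext, dif_pos x.2, Subtype.coe_eta]
  have hnot : ∀ g : G, g ∉ G₀ → h g = 0 := fun g hg => by rw [hext, dif_neg hg]
  set μ₀ := μ.comap (Subtype.val : G₀ → G) with hμ₀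
  set hC : G → ℂ := fun g => ((h g : ℝ) : ℂ) with hhC
  set h0C : G₀ → ℂ := fun x => ((h0 x : ℝ) : ℂ) with hh0C
  have hCext : ∀ g : G, hC g = if hg : g ∈ G₀ then h0C ⟨g, hg⟩ else 0 := by
    intro g
    simp only [hhC, hh0C, hext g]
    by_cases hg : g ∈ G₀
    · rw [dif_pos hg, dif_pos hg]
    · rw [dif_neg hg, dif_neg hg, Complex.ofReal_zero]
  have hCval : ∀ x : G₀, hC (x : G) = h0C x := fun x => by
    rw [hhC, hh0C]; exact congrArg _ (hval x)
  -- Fourier transform transfer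
  have hFT : ∀ χ : PontryaginDual G,
      fourierTr μ hC χ = fourierTr μ₀ h0C (resD G₀ χ) := by
    intro χ
    have h1 := integral_comap_eq μ G₀ hGm
      (fun g : G => hC g * (starRingEnd ℂ) ((χ g : ℂ)))
      (fun g hg => by
        have hz : hC g = 0 := by
          simp only [hhC, hnot g hg, Complex.ofReal_zero]
        show hC g * _ = 0
        rw [hz, zero_mul])
    have h2 : (fun x : G₀ => (fun g : G => hC g * (starRingEnd ℂ) ((χ g : ℂ))) (x : G))
        = fun x : G₀ => h0C x * (starRingEnd ℂ) (((resD G₀ χ) x : ℂ)) := by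
      funext x
      show hC (x : G) * (starRingEnd ℂ) ((χ (x : G) : ℂ)) = _
      rw [hCval x]
      rfl
    calc fourierTr μ hC χ
        = ∫ x : G₀, (fun g : G => hC g * (starRingEnd ℂ) ((χ g : ℂ))) (x : G)
            ∂(μ.comap (Subtype.val : G₀ → G)) := h1.symm
      _ = ∫ x : G₀, h0C x * (starRingEnd ℂ) (((resD G₀ χ) x : ℂ))
            ∂(μ.comap (Subtype.val : G₀ → G)) := by rw [h2]
      _ = fourierTr μ₀ h0C (resD G₀ χ) := rfl
  have hFcomp : fourierTr μ hC = (fourierTr μ₀ h0C) ∘ ⇑(resD G₀) := funext hFT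
  have hsupp : Function.support (fourierTr μ hC)
      = ⇑(resD G₀) ⁻¹' Function.support (fourierTr μ₀ h0C) := by
    rw [hFcomp]
    exact Function.support_comp_eq_preimage _ _
  -- positive part support transfer
  have hce : Topology.IsClosedEmbedding (Subtype.val : G₀ → G) :=
    hG₀closed.isClosedEmbedding_subtypeVal
  have hppsupp : Function.support (fun g : G => max (h g) 0)
      = (Subtype.val : G₀ → G) '' Function.support (fun x : G₀ => max (h0 x) 0) := by
    ext g
    constructor
    · intro hg
      have hgG₀ : g ∈ G₀ := by
        by_contra hgn
        apply hg
        show max (h g) 0 = 0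
        rw [hnot g hgn]; simp
      refine ⟨⟨g, hgG₀⟩, ?_, rfl⟩
      show max (h0 ⟨g, hgG₀⟩) 0 ≠ 0
      rw [← hval ⟨g, hgG₀⟩]
      exact hg
    · rintro ⟨x, hx, rfl⟩
      show max (h (x : G)) 0 ≠ 0
      rw [hval x]
      exact hx
  have hpptsupp : tsupport (fun g : G => max (h g) 0)
      = (Subtype.val : G₀ → G) '' tsupport (fun x : G₀ => max (h0 x) 0) := by
    rw [tsupport, hppsupp, hce.closure_image_eq, tsupport]
  have hppiff : tsupport (fun x : G₀ => max (h0 x) 0) ⊆ (Subtype.val : G₀ → G) ⁻¹' W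
      ↔ tsupport (fun g : G => max (h g) 0) ⊆ W := by
    rw [hpptsupp]
    exact (Set.image_subset_iff).symm
  -- continuity transfer
  have hcontiff : Continuous h0 ↔ Continuous h := by
    constructor
    · intro hc0
      rw [continuous_iff_continuousAt]
      intro x
      by_cases hx : x ∈ G₀
      · have hCO : ContinuousOn h (G₀ : Set G) := by
          rw [continuousOn_iff_continuous_restrict]
          have : Set.domRestrict (G₀ : Set G) h = fun x : (G₀ : Set G) => h0 ⟨x.1, x.2⟩ := by
            funext y
            exact hval ⟨y.1, y.2⟩
          rw [this]
          exact hc0.comp (continuous_subtype_val.subtype_mk _)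
        exact hCO.continuousAt (hG₀open.mem_nhds hx)
      · have hz : ContinuousAt (fun _ : G => (0 : ℝ)) x := continuousAt_const
        apply hz.congr
        refine Filter.eventuallyEq_of_mem (hG₀closed.isOpen_compl.mem_nhds hx) fun y hy => ?_
        exact (hnot y hy).symm
    · intro hc
      have : h0 = fun x : G₀ => h (x : G) := funext fun x => (hval x).symm
      rw [this]
      exact hc.comp continuous_subtype_val
  -- value at 1
  have honeiff : h0 1 = 1 ↔ h 1 = 1 := by
    have : h (1 : G) = h0 1 := hval 1
    rw [this]
  -- integrability
  have hintiff : Integrable h0 μ₀ ↔ Integrable h μ := by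
    have h1 : h0 = fun x : G₀ => h (x : G) := funext fun x => (hval x).symm
    rw [h1, hμ₀]
    exact integrable_comap_iff μ G₀ hGm h hnot
  -- positive definiteness
  have hpdiff : IsPosDefFn h0C ↔ IsPosDefFn hC := by
    constructor
    · intro hpd
      exact isPosDefFn_extension G₀ h0C hC hCext hpd
    · intro hpd n c g
      have := hpd n c (fun j => (g j : G))
      refine le_of_le_of_eq this (Finset.sum_congr rfl fun j _ =>
        Finset.sum_congr rfl fun k _ => ?_)
      congr 1
      have : ((g j : G) / (g k : G)) = ((g j / g k : G₀) : G) := rfl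
      rw [this, hCval]
  -- Fourier support conditions
  set Qs : Set (PontryaginDual G₀) := {γ : PontryaginDual G₀ |
    ∀ χ : PontryaginDual G, (∀ g : G₀, χ (g : G) = γ g) → χ ∈ Q} with hQs
  have hFsuppiff : tsupport (fourierTr μ₀ h0C) ⊆ Qs
      ↔ tsupport (fourierTr μ hC) ⊆ Q := by
    constructor
    · intro hsub
      have h1 : Function.support (fourierTr μ hC)
          ⊆ ⇑(resD G₀) ⁻¹' tsupport (fourierTr μ₀ h0C) := by
        rw [hsupp]
        exact Set.preimage_mono subset_closure
      have h2 : IsClosed (⇑(resD G₀) ⁻¹' tsupport (fourierTr μ₀ h0C)) :=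
        (isClosed_tsupport _).preimage (map_continuous (resD G₀))
      refine (closure_minimal h1 h2).trans ?_
      intro χ hχ
      exact hsub hχ χ (fun x => rfl)
    · intro hsub
      have hclosedmap := resD_isClosedMap G₀ hG₀open
      have h1 : Function.support (fourierTr μ₀ h0C)
          ⊆ ⇑(resD G₀) '' tsupport (fourierTr μ hC) := by
        intro γ hγ
        obtain ⟨χ', hχ'⟩ := exists_pontryaginDual_extension G₀ hG₀open γ
        have hres : resD G₀ χ' = γ := DFunLike.ext _ _ hχ'
        refine ⟨χ', subset_closure ?_, hres⟩
        show fourierTr μ hC χ' ≠ 0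
        rw [hFT χ', hres]
        exact hγ
      have h2 : IsClosed (⇑(resD G₀) '' tsupport (fourierTr μ hC)) :=
        hclosedmap _ (isClosed_tsupport _)
      have h3 : tsupport (fourierTr μ₀ h0C) ⊆ ⇑(resD G₀) '' tsupport (fourierTr μ hC) :=
        closure_minimal h1 h2
      intro γ hγ χ hχres
      have hres : resD G₀ χ = γ := DFunLike.ext _ _ hχres
      obtain ⟨χ'', hχ''T, hχ''res⟩ := h3 hγ
      -- saturation of tsupport under the kernel of the restriction
      set κ : PontryaginDual G := χ / χ'' with hκ
      have hκres : resD G₀ κ = 1 := by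
        rw [hκ, map_div, hres, hχ''res, div_self']
      have hFκ : ∀ ψ : PontryaginDual G, fourierTr μ hC (κ * ψ) = fourierTr μ hC ψ := by
        intro ψ
        rw [hFT, hFT, map_mul, hκres, one_mul]
      have himg : (fun ψ : PontryaginDual G => κ * ψ) '' Function.support (fourierTr μ hC)
          = Function.support (fourierTr μ hC) := by
        apply Set.Subset.antisymm
        · rintro _ ⟨ψ, hψ, rfl⟩
          show fourierTr μ hC (κ * ψ) ≠ 0
          rw [hFκ ψ]
          exact hψ
        · intro ψ hψ
          refine ⟨κ⁻¹ * ψ, ?_, mul_inv_cancel_left κ ψ⟩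
          show fourierTr μ hC (κ⁻¹ * ψ) ≠ 0
          intro hzero
          apply hψ
          have : fourierTr μ hC (κ * (κ⁻¹ * ψ)) = 0 := by rw [hFκ]; exact hzero
          rwa [mul_inv_cancel_left κ ψ] at this
      have hχmem : χ ∈ tsupport (fourierTr μ hC) := by
        have hhomeo := Homeomorph.mulLeft κ
        have h4 : χ = κ * χ'' := by rw [hκ, div_mul_cancel]
        have h5 : χ ∈ (fun ψ : PontryaginDual G => κ * ψ) '' tsupport (fourierTr μ hC) :=
          ⟨χ'', hχ''T, h4.symm⟩
        have h6 : (fun ψ : PontryaginDual G => κ * ψ) '' tsupport (fourierTr μ hC)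
            = tsupport (fourierTr μ hC) := by
          show (Homeomorph.mulLeft κ) '' closure (Function.support (fourierTr μ hC)) = _
          rw [(Homeomorph.mulLeft κ).image_closure]
          show closure ((fun ψ : PontryaginDual G => κ * ψ) '' _) = _
          rw [himg]
          rfl
        rwa [h6] at h5
      exact hsub hχmem
  -- assemble
  simp only [gclass, Set.mem_setOf_eq]
  constructor
  · rintro ⟨c1, c2, c3, c4, c5, c6⟩
    exact ⟨hcontiff.mp c1, hpdiff.mp c2, hintiff.mp c3, honeiff.mp c4,
      hppiff.mp c5, hFsuppiff.mp c6⟩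
  · rintro ⟨c1, c2, c3, c4, c5, c6⟩
    exact ⟨hcontiff.mpr c1, hpdiff.mpr c2, hintiff.mpr c3, honeiff.mpr c4,
      hppiff.mpr c5, hFsuppiff.mpr c6⟩

end
end
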